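/- arXiv:1608.00769 — 2 statements merged into one kernel-verified Lean document; each statement's English description precedes it below -/
import Mathlib

section
/- For any tree T with at least three vertices and any positive integer t, the diameter of the generalized Sierpiński graph S(T,t) is D(S(T,t)) = (3·2^t − 2t − 3)·D(T) − 4·(2^t − t − 1), where D(T) is the diameter of T. -/
/-- The generalized Sierpiński graph `S(G,t)` of a base graph `G`: vertices are words of
length `t` over the vertex set (encoded as `Fin t → V`); two words are adjacent iff they are
of the form `w x y^{d-1}` and `w y x^{d-1}` for some edge `{x,y}` of `G`. -/
def SierpinskiGraph {V : Type*} (G : SimpleGraph V) (t : ℕ) : SimpleGraph (Fin t → V) where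
  Adj u v := ∃ i : Fin t, G.Adj (u i) (v i) ∧
      (∀ j : Fin t, j < i → u j = v j) ∧
      (∀ j : Fin t, i < j → u j = v i ∧ v j = u i)
  symm := by
    constructor
    rintro u v ⟨i, h1, h2, h3⟩
    exact ⟨i, h1.symm, fun j hj => (h2 j hj).symm, fun j hj => ⟨(h3 j hj).2, (h3 j hj).1⟩⟩
  loopless := by
    constructor
    rintro u ⟨i, h1, -, -⟩
    exact G.loopless.irrefl _ h1

/-- Eccentricity of a vertex: the maximum distance to any other vertex. -/
noncomputable def eccent {V : Type*} (G : SimpleGraph V) (v : V) : ℕ := ⨆ u, G.dist v u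

/-- Diameter: maximum eccentricity. -/
noncomputable def graphDiam {V : Type*} (G : SimpleGraph V) : ℕ := ⨆ v, eccent G v

/-- Radius: minimum eccentricity. -/
noncomputable def graphRadius {V : Type*} (G : SimpleGraph V) : ℕ := ⨅ v, eccent G v

namespace SierpAux
open SimpleGraph hiding eccent

variable {V : Type*} {W : Type*}

/-- Weak homomorphism walk transfer. -/
lemma walk_transfer {G : SimpleGraph V} {G' : SimpleGraph W} (f : V → W)
    (hf : ∀ ⦃u v⦄, G.Adj u v → f u = f v ∨ G'.Adj (f u) (f v)) :
    ∀ {x y : V} (w : G.Walk x y), ∃ w' : G'.Walk (f x) (f y), w'.length ≤ w.length := by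
  intro x y w
  induction w with
  | nil => exact ⟨.nil, le_rfl⟩
  | cons h p ih =>
    obtain ⟨w', hw'⟩ := ih
    rcases hf h with heq | hadj
    · exact ⟨w'.copy heq.symm rfl, by simpa using hw'.trans (Nat.le_succ _)⟩
    · exact ⟨.cons hadj w', by simpa using hw'⟩

lemma dist_le_of_weakHom {G : SimpleGraph V} {G' : SimpleGraph W} (f : V → W)
    (hf : ∀ ⦃u v⦄, G.Adj u v → f u = f v ∨ G'.Adj (f u) (f v)) {x y : V}
    (hr : G.Reachable x y) : G'.dist (f x) (f y) ≤ G.dist x y := by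
  obtain ⟨w, hw⟩ := hr.exists_walk_length_eq_dist
  obtain ⟨w', hw'⟩ := walk_transfer f hf w
  exact (SimpleGraph.dist_le w').trans (hw ▸ hw')

/-- Any walk from the `S` side to the non-`S` side decomposes at the unique crossing edge. -/
lemma cut_walk {G : SimpleGraph V} {S : V → Prop} {p q : V}
    (hcross : ∀ ⦃u v⦄, G.Adj u v → S u → ¬S v → u = p ∧ v = q) :
    ∀ {x y : V} (w : G.Walk x y), S x → ¬S y →
      ∃ (w1 : G.Walk x p) (w2 : G.Walk q y), w1.length + 1 + w2.length ≤ w.length := by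
  intro x y w
  induction w with
  | nil => intro hx hy; exact absurd hx hy
  | @cons a b c h p ih =>
    intro hx hy
    by_cases hSb : S b
    · obtain ⟨w1, w2, hw⟩ := ih hSb hy
      refine ⟨.cons h w1, w2, ?_⟩
      simp only [SimpleGraph.Walk.length_cons]
      omega
    · obtain ⟨hp, hq⟩ := hcross h hx hSb
      subst hp; subst hq
      refine ⟨.nil, p, ?_⟩
      simp [Nat.add_comm]


lemma cut_dist {G : SimpleGraph V} (hconn : G.Connected) {S : V → Prop} {p q x y : V}
    (hpq : G.Adj p q)
    (hcross : ∀ ⦃u v⦄, G.Adj u v → S u → ¬S v → u = p ∧ v = q)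
    (hx : S x) (hy : ¬S y) :
    G.dist x y = G.dist x p + 1 + G.dist q y := by
  apply le_antisymm
  · obtain ⟨w1, hw1⟩ := hconn.exists_walk_length_eq_dist x p
    obtain ⟨w2, hw2⟩ := hconn.exists_walk_length_eq_dist q y
    have := SimpleGraph.dist_le (w1.append (SimpleGraph.Walk.cons hpq w2))
    simpa [SimpleGraph.Walk.length_append, hw1, hw2, Nat.add_comm, Nat.add_assoc,
      Nat.add_left_comm] using this
  · obtain ⟨w, hw⟩ := hconn.exists_walk_length_eq_dist x y
    obtain ⟨w1, w2, hle⟩ := cut_walk hcross w hx hy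
    calc G.dist x p + 1 + G.dist q y ≤ w1.length + 1 + w2.length := by
          have h1 := SimpleGraph.dist_le w1
          have h2 := SimpleGraph.dist_le w2
          omega
      _ ≤ w.length := hle
      _ = G.dist x y := hw

/-! ### Tree side machinery -/

variable (T : SimpleGraph V)

/-- `Tside a z v` : vertex `v` lies on the `z`-side of the edge `{a, z}`. -/
def Tside (a z v : V) : Prop := (T \ SimpleGraph.fromEdgeSet {s(a, z)}).Reachable v z

variable {T}

lemma tside_self (a z : V) : Tside T a z z := SimpleGraph.Reachable.refl z

lemma not_tside_of_acyclic (hA : T.IsAcyclic) {a z : V} (h : T.Adj a z) : ¬ Tside T a z a := by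
  have hb := (SimpleGraph.isAcyclic_iff_forall_adj_isBridge.mp hA) h
  rw [SimpleGraph.isBridge_iff] at hb
  exact fun hr => hb hr

private lemma walk_reach_delete {a z : V} :
    ∀ {v c : V} (_ : T.Walk v c),
      (T \ SimpleGraph.fromEdgeSet {s(a, z)}).Reachable v c ∨
      (T \ SimpleGraph.fromEdgeSet {s(a, z)}).Reachable v a ∨
      (T \ SimpleGraph.fromEdgeSet {s(a, z)}).Reachable v z := by
  intro v c w
  induction w with
  | nil => exact Or.inl (SimpleGraph.Reachable.refl _)
  | @cons u b c h p ih =>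
    by_cases he : s(u, b) = s(a, z)
    · rcases Sym2.eq_iff.mp he with ⟨h1, h2⟩ | ⟨h1, h2⟩
      · exact Or.inr (Or.inl (h1 ▸ SimpleGraph.Reachable.refl u))
      · exact Or.inr (Or.inr (h1 ▸ SimpleGraph.Reachable.refl u))
    · have hadj : (T \ SimpleGraph.fromEdgeSet {s(a, z)}).Adj u b := by
        simp only [SimpleGraph.sdiff_adj, SimpleGraph.fromEdgeSet_adj]
        exact ⟨h, fun hmem => he (by simpa using hmem.1)⟩
      have hr : (T \ SimpleGraph.fromEdgeSet {s(a, z)}).Reachable u b := ⟨.cons hadj .nil⟩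
      rcases ih with h' | h' | h'
      · exact Or.inl (hr.trans h')
      · exact Or.inr (Or.inl (hr.trans h'))
      · exact Or.inr (Or.inr (hr.trans h'))

lemma tside_total (hconn : T.Connected) {a z : V} (v : V) :
    Tside T a z v ∨ Tside T z a v := by
  obtain ⟨w⟩ := hconn v z
  rcases walk_reach_delete (a := a) (z := z) w with h | h | h
  · exact Or.inl h
  · right; rw [Tside, Sym2.eq_swap]; exact h
  · exact Or.inl h

lemma tside_not_both (hT : T.IsTree) {a z : V} (h : T.Adj a z) (v : V) :
    ¬ (Tside T a z v ∧ Tside T z a v) := by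
  rintro ⟨h1, h2⟩
  have he : s(z, a) = s(a, z) := Sym2.eq_swap
  rw [Tside, he] at h2
  exact not_tside_of_acyclic hT.IsAcyclic h (h2.symm.trans h1)

/-- an edge of `T` distinct (as an unordered pair) from `{a,z}` stays on one side -/
lemma tside_step (hconn : T.Connected) {a z u v : V} (huv : T.Adj u v)
    (hne : s(u, v) ≠ s(a, z)) (hu : Tside T a z u) : Tside T a z v := by
  refine SimpleGraph.Reachable.trans ⟨SimpleGraph.Walk.cons ?_ .nil⟩ hu
  simp only [SimpleGraph.sdiff_adj, SimpleGraph.fromEdgeSet_adj]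
  exact ⟨huv.symm, fun hmem => hne (by simpa [Sym2.eq_swap] using hmem.1)⟩

/-- crossing uniqueness: the only `T`-edge from the `a`-side to the `z`-side of `{a,z}`
is `(a, z)` itself. -/
lemma tside_cross (hT : T.IsTree) {a z : V} (h : T.Adj a z) :
    ∀ ⦃u v : V⦄, T.Adj u v → Tside T z a u → ¬ Tside T z a v → u = a ∧ v = z := by
  intro u v huv hu hv
  by_cases he : s(u, v) = s(a, z)
  · rcases Sym2.eq_iff.mp he with ⟨h1, h2⟩ | ⟨h1, h2⟩
    · exact ⟨h1, h2⟩
    · rw [h2] at hv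
      exact absurd (tside_self z a) hv
  · exact absurd (tside_step hT.isConnected huv
      (fun hh => he (hh.trans Sym2.eq_swap)) hu) hv

/-- cut distance formula in the tree: `x` on the `a`-side, `y` on the `z`-side. -/
lemma tside_dist (hT : T.IsTree) {a z x y : V} (h : T.Adj a z)
    (hx : Tside T z a x) (hy : ¬ Tside T z a y) :
    T.dist x y = T.dist x a + 1 + T.dist z y :=
  cut_dist hT.isConnected h (tside_cross hT h) hx hy


/-! ### The step function: first vertex on the path from `x` towards `y` -/

lemma tstep_exists (hT : T.IsTree) {x y : V} (hxy : x ≠ y) :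
    ∃ z, T.Adj x z ∧ Tside T x z y := by
  classical
  obtain ⟨w0, hw0⟩ := hT.isConnected.exists_walk_length_eq_dist x y
  have hpos : 0 < T.dist x y := hT.isConnected.pos_dist_of_ne hxy
  set p := w0.bypass with hp
  have hpath : p.IsPath := w0.bypass_isPath
  have hplen : p.length ≤ T.dist x y := hw0 ▸ w0.length_bypass_le
  cases hq : p with
  | nil => exact absurd rfl hxy
  | @cons _ b _ h rest =>
    refine ⟨b, h, ?_⟩
    -- rest is a walk b → y not visiting x, so it avoids the edge {x,b}
    have hxs : x ∉ rest.support := by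
      have := hpath
      rw [hq] at this
      exact (SimpleGraph.Walk.cons_isPath_iff h rest).mp this |>.2
    have hrest : ∀ e ∈ rest.edges, e ∈ (T \ SimpleGraph.fromEdgeSet {s(x, b)}).edgeSet := by
      intro e he
      have heT : e ∈ T.edgeSet := rest.edges_subset_edgeSet he
      have hne : e ≠ s(x, b) := by
        rintro rfl
        exact hxs (rest.fst_mem_support_of_mem_edges he)
      rw [SimpleGraph.edgeSet_sdiff]
      refine ⟨heT, ?_⟩
      simp only [SimpleGraph.edgeSet_fromEdgeSet, Set.mem_diff, Set.mem_singleton_iff]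
      rintro ⟨h1, -⟩
      exact hne h1
    exact ⟨(rest.transfer _ hrest).reverse⟩

open scoped Classical in
/-- The neighbor of `x` on the unique path from `x` to `y` (junk if none exists). -/
noncomputable def tstep (T : SimpleGraph V) (x y : V) : V :=
  if h : ∃ z, T.Adj x z ∧ Tside T x z y then h.choose else x

lemma tstep_spec (hT : T.IsTree) {x y : V} (hxy : x ≠ y) :
    T.Adj x (tstep T x y) ∧ Tside T x (tstep T x y) y := by
  have h := tstep_exists hT hxy
  rw [tstep, dif_pos h]
  exact h.choose_spec

lemma tstep_adj (hT : T.IsTree) {x y : V} (hxy : x ≠ y) : T.Adj x (tstep T x y) :=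
  (tstep_spec hT hxy).1

lemma tstep_side (hT : T.IsTree) {x y : V} (hxy : x ≠ y) : Tside T x (tstep T x y) y :=
  (tstep_spec hT hxy).2

/-- Uniqueness of the step vertex. -/
lemma tstep_unique (hT : T.IsTree) {x y z : V} (hxy : x ≠ y) (hz : T.Adj x z)
    (hside : Tside T x z y) : z = tstep T x y := by
  by_contra hne
  have hz'adj : T.Adj x (tstep T x y) := tstep_adj hT hxy
  have hz'side : Tside T x (tstep T x y) y := tstep_side hT hxy
  obtain ⟨W1⟩ := hside
  set z' := tstep T x y
  -- predicate: on the x-side of edge {x, z'}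
  have hSz : Tside T z' x z := by
    refine SimpleGraph.Reachable.trans ⟨SimpleGraph.Walk.cons ?_ .nil⟩ (tside_self z' x)
    simp only [SimpleGraph.sdiff_adj, SimpleGraph.fromEdgeSet_adj]
    refine ⟨hz.symm, ?_⟩
    rintro ⟨h1, -⟩
    simp only [Set.mem_singleton_iff] at h1
    rcases Sym2.eq_iff.mp h1 with ⟨h2, h3⟩ | ⟨h2, h3⟩
    · exact hne h2
    · exact hz.ne h2.symm
  have hSy : ¬ Tside T z' x y := fun hy => tside_not_both hT hz'adj y ⟨hz'side, hy⟩
  have hcross : ∀ ⦃u v : V⦄, (T \ SimpleGraph.fromEdgeSet {s(x, z)}).Adj u v →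
      Tside T z' x u → ¬ Tside T z' x v → u = x ∧ v = z' := by
    intro u v huv hu hv
    exact tside_cross hT hz'adj huv.1 hu hv
  obtain ⟨w1, w2, -⟩ := cut_walk hcross W1.reverse hSz hSy
  have hreach : (T \ SimpleGraph.fromEdgeSet {s(x, z)}).Reachable z x := ⟨w1⟩
  have hbridge := (SimpleGraph.isAcyclic_iff_forall_adj_isBridge.mp hT.IsAcyclic) hz
  rw [SimpleGraph.isBridge_iff] at hbridge
  exact hbridge hreach.symm

lemma tstep_eq_of_adj (hT : T.IsTree) {x y : V} (h : T.Adj x y) : tstep T x y = y :=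
  (tstep_unique hT h.ne h (tside_self x y)).symm

/-- `dist x y = dist (tstep x y) y + 1`. -/
lemma tstep_dist (hT : T.IsTree) {x y : V} (hxy : x ≠ y) :
    T.dist x y = T.dist (tstep T x y) y + 1 := by
  set z := tstep T x y with hz
  have hadj : T.Adj x z := tstep_adj hT hxy
  have hy : ¬ Tside T z x y := fun hy => tside_not_both hT hadj y ⟨tstep_side hT hxy, hy⟩
  have h1 := tside_dist hT hadj (tside_self z x) hy
  have h2 : T.dist x x = 0 := SimpleGraph.dist_self
  omega

lemma tstep_congr (hT : T.IsTree) {x u v : V} (hu : u ≠ x) (hv : v ≠ x) (hxu : x ≠ u)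
    (huv : T.Adj u v) : tstep T x u = tstep T x v := by
  have hn : T.Adj x (tstep T x u) := tstep_adj hT hxu
  have hside : Tside T x (tstep T x u) u := tstep_side hT hxu
  have hside' : Tside T x (tstep T x u) v := by
    refine tside_step hT.isConnected huv ?_ hside
    intro hh
    rcases Sym2.eq_iff.mp hh with ⟨h2, h3⟩ | ⟨h2, h3⟩
    · exact hu h2
    · exact hv h3
  exact tstep_unique hT (Ne.symm hv) hn hside'


/-! ### Eccentricity / diameter helpers -/

section Ecc
variable {W : Type*} [Finite W] (G : SimpleGraph W)

lemma dist_le_eccent (v u : W) : G.dist v u ≤ eccent G v :=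
  le_ciSup (Set.finite_range _).bddAbove u

lemma eccent_le_graphDiam (v : W) : eccent G v ≤ graphDiam G :=
  le_ciSup (Set.finite_range _).bddAbove v

lemma dist_le_graphDiam (v u : W) : G.dist v u ≤ graphDiam G :=
  (dist_le_eccent G v u).trans (eccent_le_graphDiam G v)

variable [Nonempty W]

lemma exists_eccent (v : W) : ∃ u, G.dist v u = eccent G v :=
  exists_eq_ciSup_of_finite

lemma exists_graphDiam : ∃ v u, G.dist v u = graphDiam G := by
  obtain ⟨v, hv⟩ : ∃ v, eccent G v = graphDiam G := exists_eq_ciSup_of_finite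
  obtain ⟨u, hu⟩ := exists_eccent G v
  exact ⟨v, u, hu.trans hv⟩

lemma eccent_le {v : W} {n : ℕ} (h : ∀ u, G.dist v u ≤ n) : eccent G v ≤ n :=
  ciSup_le h

lemma graphDiam_le {n : ℕ} (h : ∀ v u, G.dist v u ≤ n) : graphDiam G ≤ n :=
  ciSup_le fun v => eccent_le G (h v)

end Ecc


/-! ### Four point condition and eccentricity facts for trees -/

section Tree4
variable {V : Type*} {T : SimpleGraph V}

lemma tree_four_point (hT : T.IsTree) :
    ∀ (n : ℕ) (x y z w : V), T.dist x y ≤ n →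
      T.dist x y + T.dist z w ≤ max (T.dist x z + T.dist y w) (T.dist x w + T.dist y z) := by
  intro n
  induction n with
  | zero =>
    intro x y z w h
    have hxy : x = y := (hT.isConnected.dist_eq_zero_iff).mp (Nat.le_zero.mp h)
    subst hxy
    have h0 : T.dist x x = 0 := SimpleGraph.dist_self
    have ht := hT.isConnected.dist_triangle (u := z) (v := x) (w := w)
    have hc : T.dist z x = T.dist x z := SimpleGraph.dist_comm
    refine le_max_iff.mpr (Or.inl ?_)
    omega
  | succ n ih =>
    intro x y z w h
    by_cases hxy : x = y
    · subst hxy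
      have h0 : T.dist x x = 0 := SimpleGraph.dist_self
      have ht := hT.isConnected.dist_triangle (u := z) (v := x) (w := w)
      have hc : T.dist z x = T.dist x z := SimpleGraph.dist_comm
      refine le_max_iff.mpr (Or.inl ?_)
      omega
    · set z' := tstep T x y with hz'
      have hadj : T.Adj x z' := tstep_adj hT hxy
      have hyS : ¬ Tside T z' x y :=
        fun hy => tside_not_both hT hadj y ⟨tstep_side hT hxy, hy⟩
      have hdist : T.dist x y = T.dist z' y + 1 := tstep_dist hT hxy
      have h0 : T.dist x x = 0 := SimpleGraph.dist_self
      -- distance formulas depending on sides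
      have hfar : ∀ v : V, ¬ Tside T z' x v → T.dist x v = 1 + T.dist z' v := by
        intro v hv
        have := tside_dist hT hadj (tside_self z' x) hv
        omega
      have hnear : ∀ v : V, Tside T z' x v → T.dist v y = T.dist v x + 1 + T.dist z' y := by
        intro v hv
        exact tside_dist hT hadj hv hyS
      by_cases hz : Tside T z' x z <;> by_cases hw : Tside T z' x w
      · -- both near
        have e1 := hnear z hz
        have e2 := hnear w hw
        have ht := hT.isConnected.dist_triangle (u := z) (v := x) (w := w)
        have c1 : T.dist z x = T.dist x z := SimpleGraph.dist_comm
        have c2 : T.dist y w = T.dist w y := SimpleGraph.dist_comm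
        have c3 : T.dist y z = T.dist z y := SimpleGraph.dist_comm
        have c5 : T.dist x w = T.dist w x := SimpleGraph.dist_comm
        refine le_max_iff.mpr (Or.inl ?_)
        omega
      · -- z near, w far
        have e1 := hnear z hz
        have e2 := hfar w hw
        have e3 := tside_dist hT hadj hz hw  -- dist z w = dist z x + 1 + dist z' w
        have c3 : T.dist y z = T.dist z y := SimpleGraph.dist_comm
        refine le_max_iff.mpr (Or.inr ?_)
        omega
      · -- w near, z far
        have e1 := hnear w hw
        have e2 := hfar z hz
        have e3 := tside_dist hT hadj hw hz  -- dist w z = dist w x + 1 + dist z' z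
        have c2 : T.dist y w = T.dist w y := SimpleGraph.dist_comm
        have c4 : T.dist z w = T.dist w z := SimpleGraph.dist_comm
        have c5 : T.dist w x = T.dist x w := SimpleGraph.dist_comm
        refine le_max_iff.mpr (Or.inl ?_)
        omega
      · -- both far
        have e1 := hfar z hz
        have e2 := hfar w hw
        have h4 := ih z' y z w (by omega)
        rcases le_max_iff.mp h4 with h5 | h5
        · exact le_max_iff.mpr (Or.inl (by omega))
        · exact le_max_iff.mpr (Or.inr (by omega))

lemma tree_four_point' (hT : T.IsTree) (x y z w : V) :
    T.dist x y + T.dist z w ≤ max (T.dist x z + T.dist y w) (T.dist x w + T.dist y z) :=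
  tree_four_point hT (T.dist x y) x y z w le_rfl

variable [Finite V]

/-- eccentricity is attained at an endpoint of a diametral pair -/
lemma tree_ecc_endpoint (hT : T.IsTree) {p q : V} (hpq : T.dist p q = graphDiam T) (c : V) :
    ∃ a, T.dist c a = eccent T c ∧ eccent T a = graphDiam T := by
  have : Nonempty V := ⟨c⟩
  obtain ⟨w, hw⟩ := exists_eccent T c
  have h4 := tree_four_point' hT c w p q
  have c1 : T.dist w p = T.dist p w := SimpleGraph.dist_comm
  have c2 : T.dist w q = T.dist q w := SimpleGraph.dist_comm
  have b1 : T.dist p w ≤ graphDiam T := dist_le_graphDiam T p w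
  have b2 : T.dist q w ≤ graphDiam T := dist_le_graphDiam T q w
  have b3 : T.dist c p ≤ eccent T c := dist_le_eccent T c p
  have b4 : T.dist c q ≤ eccent T c := dist_le_eccent T c q
  have hpD : eccent T p = graphDiam T := by
    have h1 : eccent T p ≤ graphDiam T := eccent_le_graphDiam T p
    have h2 : T.dist p q ≤ eccent T p := dist_le_eccent T p q
    omega
  have hqD : eccent T q = graphDiam T := by
    have h1 : eccent T q ≤ graphDiam T := eccent_le_graphDiam T q
    have h2 : T.dist q p ≤ eccent T q := dist_le_eccent T q p
    have c3 : T.dist q p = T.dist p q := SimpleGraph.dist_comm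
    omega
  rcases le_max_iff.mp h4 with h5 | h5
  · exact ⟨p, by omega, hpD⟩
  · exact ⟨q, by omega, hqD⟩

/-- key bound: for `a ≠ c` and `z = tstep a c`, either `ecc z ≤ D - 1`
or `ecc z + dist a c ≤ ecc c + 1`. -/
lemma tree_step_ecc_bound (hT : T.IsTree) {a c : V} (hac : a ≠ c) :
    eccent T (tstep T a c) + 1 ≤ graphDiam T ∨
    eccent T (tstep T a c) + T.dist a c ≤ eccent T c + 1 := by
  have : Nonempty V := ⟨a⟩
  set z := tstep T a c with hz
  have hadj : T.Adj a z := tstep_adj hT hac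
  obtain ⟨w, hw⟩ := exists_eccent T z
  rcases tside_total hT.isConnected (a := a) (z := z) w with hwz | hwa
  · -- w on z-side: dist a w = 1 + ecc z ≤ D
    left
    have h1 : ¬ Tside T z a w := fun hw2 => tside_not_both hT hadj w ⟨hwz, hw2⟩
    have h2 := tside_dist hT hadj (tside_self z a) h1
    have h0 : T.dist a a = 0 := SimpleGraph.dist_self
    have h3 : T.dist a w ≤ graphDiam T := dist_le_graphDiam T a w
    omega
  · -- w on a-side
    right
    have hcz : Tside T a z c := tstep_side hT hac
    have hcz' : ¬ Tside T z a c := fun hc2 => tside_not_both hT hadj c ⟨hcz, hc2⟩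
    have e1 := tside_dist hT hadj hwa hcz'  -- dist w c = dist w a + 1 + dist z c
    have hznots : ¬ Tside T z a z := fun hz2 => tside_not_both hT hadj z ⟨tside_self a z, hz2⟩
    have e2 := tside_dist hT hadj hwa hznots  -- dist w z = dist w a + 1 + dist z z
    have h0 : T.dist z z = 0 := SimpleGraph.dist_self
    have c1 : T.dist w z = T.dist z w := SimpleGraph.dist_comm
    have e3 : T.dist a c = T.dist z c + 1 := tstep_dist hT hac
    have b1 : T.dist w c ≤ eccent T c := by
      have := dist_le_eccent T c w
      have hc : T.dist c w = T.dist w c := SimpleGraph.dist_comm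
      omega
    omega

lemma tree_dist_le_ecc' (c a : V) : T.dist a c ≤ eccent T c := by
  have := dist_le_eccent T c a
  have hc : T.dist c a = T.dist a c := SimpleGraph.dist_comm
  omega

lemma tree_step_ecc_lower (hT : T.IsTree) {a c : V} (hac : a ≠ c)
    (ha : eccent T a = graphDiam T) :
    graphDiam T ≤ eccent T (tstep T a c) + 1 := by
  have : Nonempty V := ⟨a⟩
  set z := tstep T a c with hz
  obtain ⟨w, hw⟩ := exists_eccent T a
  have hadj : T.Adj a z := tstep_adj hT hac
  have h1 : T.dist a z = 1 := SimpleGraph.dist_eq_one_iff_adj.mpr hadj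
  have ht := hT.isConnected.dist_triangle (u := a) (v := z) (w := w)
  have h2 : T.dist z w ≤ eccent T z := dist_le_eccent T z w
  omega

end Tree4


/-! ### Sierpiński graph structure -/

section Sierp
variable {V : Type*} {T : SimpleGraph V} {t : ℕ}

lemma cons_const (c : V) : (Fin.cons c (fun _ => c) : Fin (t+1) → V) = fun _ => c := by
  funext i
  refine Fin.cases ?_ ?_ i <;> simp

lemma sg_adj_same_head {u v : Fin (t+1) → V} (h : (SierpinskiGraph T (t+1)).Adj u v)
    (h0 : u 0 = v 0) : (SierpinskiGraph T t).Adj (Fin.tail u) (Fin.tail v) := by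
  obtain ⟨i, h1, h2, h3⟩ := h
  have hi : i ≠ 0 := by rintro rfl; exact h1.ne h0
  obtain ⟨j, rfl⟩ := Fin.eq_succ_of_ne_zero hi
  refine ⟨j, h1, fun k hk => h2 k.succ (Fin.succ_lt_succ_iff.mpr hk), fun k hk => ?_⟩
  exact h3 k.succ (Fin.succ_lt_succ_iff.mpr hk)

lemma sg_adj_ne_head {u v : Fin (t+1) → V} (h : (SierpinskiGraph T (t+1)).Adj u v)
    (h0 : u 0 ≠ v 0) : T.Adj (u 0) (v 0) ∧ (Fin.tail u = fun _ => v 0) ∧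
      (Fin.tail v = fun _ => u 0) := by
  obtain ⟨i, h1, h2, h3⟩ := h
  rcases Fin.eq_zero_or_eq_succ i with rfl | ⟨j, rfl⟩
  · refine ⟨h1, funext fun k => ?_, funext fun k => ?_⟩
    · exact (h3 k.succ (Fin.succ_pos k)).1
    · exact (h3 k.succ (Fin.succ_pos k)).2
  · exact absurd (h2 0 (Fin.succ_pos j)) h0

lemma sg_adj_of_tail {a : V} {u v : Fin t → V} (h : (SierpinskiGraph T t).Adj u v) :
    (SierpinskiGraph T (t+1)).Adj (Fin.cons a u) (Fin.cons a v) := by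
  obtain ⟨j, h1, h2, h3⟩ := h
  refine ⟨j.succ, by simpa using h1, fun k hk => ?_, fun k hk => ?_⟩
  · revert hk
    refine Fin.cases ?_ ?_ k
    · intro _; simp
    · intro k' hk'
      simp only [Fin.cons_succ]
      exact h2 k' (Fin.succ_lt_succ_iff.mp hk')
  · revert hk
    refine Fin.cases ?_ ?_ k
    · intro hlt; exact absurd hlt (Fin.not_lt_zero _)
    · intro k' hk'
      simp only [Fin.cons_succ]
      exact h3 k' (Fin.succ_lt_succ_iff.mp hk')

lemma sg_adj_bridge {a b : V} (hab : T.Adj a b) :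
    (SierpinskiGraph T (t+1)).Adj (Fin.cons a (fun _ => b)) (Fin.cons b (fun _ => a)) := by
  refine ⟨0, by simpa using hab, fun j hj => absurd hj (Fin.not_lt_zero j), fun j hj => ?_⟩
  obtain ⟨k, rfl⟩ := Fin.eq_succ_of_ne_zero (Fin.pos_iff_ne_zero.mp hj)
  simp

end Sierp


section Sierp2
variable {V : Type*} {T : SimpleGraph V} {t : ℕ}

lemma sg_hom_up (a : V) : ∀ ⦃u v : Fin t → V⦄, (SierpinskiGraph T t).Adj u v →
    ((Fin.cons a u : Fin (t+1) → V) = Fin.cons a v) ∨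
      (SierpinskiGraph T (t+1)).Adj (Fin.cons a u) (Fin.cons a v) :=
  fun _ _ h => Or.inr (sg_adj_of_tail h)

lemma sg_reach_cons {a : V} (hc : (SierpinskiGraph T t).Connected) (u u' : Fin t → V) :
    (SierpinskiGraph T (t+1)).Reachable (Fin.cons a u) (Fin.cons a u') := by
  obtain ⟨wk⟩ := hc u u'
  obtain ⟨w', -⟩ := walk_transfer (fun w : Fin t → V => (Fin.cons a w : Fin (t+1) → V))
    (sg_hom_up a) wk
  exact ⟨w'⟩

lemma sg_connected (hT : T.IsTree) : ∀ t : ℕ, (SierpinskiGraph T t).Connected := by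
  intro t
  induction t with
  | zero =>
    haveI : Nonempty (Fin 0 → V) := ⟨fun i => i.elim0⟩
    refine ⟨fun u v => ?_⟩
    have : u = v := funext fun i => i.elim0
    exact this ▸ SimpleGraph.Reachable.refl u
  | succ t ih =>
    have key : ∀ (n : ℕ) (w : Fin (t+1) → V) (c : V), T.dist (w 0) c ≤ n →
        (SierpinskiGraph T (t+1)).Reachable w (fun _ => c) := by
      intro n
      induction n with
      | zero =>
        intro w c h
        have h0 : w 0 = c := (hT.isConnected.dist_eq_zero_iff).mp (Nat.le_zero.mp h)
        have r1 : (SierpinskiGraph T (t+1)).Reachable (Fin.cons (w 0) (Fin.tail w))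
            (Fin.cons (w 0) (fun _ => c)) := sg_reach_cons ih _ _
        rw [Fin.cons_self_tail, h0, cons_const] at r1
        exact r1
      | succ n ihn =>
        intro w c h
        by_cases h0 : w 0 = c
        · have r1 : (SierpinskiGraph T (t+1)).Reachable (Fin.cons (w 0) (Fin.tail w))
              (Fin.cons (w 0) (fun _ => c)) := sg_reach_cons ih _ _
          rw [Fin.cons_self_tail, h0, cons_const] at r1
          exact r1
        · set z := tstep T (w 0) c with hz
          have hadj : T.Adj (w 0) z := tstep_adj hT h0
          have r1 : (SierpinskiGraph T (t+1)).Reachable (Fin.cons (w 0) (Fin.tail w))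
              (Fin.cons (w 0) (fun _ => z)) := sg_reach_cons ih _ _
          rw [Fin.cons_self_tail] at r1
          have r2 : (SierpinskiGraph T (t+1)).Reachable (Fin.cons (w 0) (fun _ => z))
              (Fin.cons z (fun _ => w 0)) := (sg_adj_bridge hadj).reachable
          have hle : T.dist ((Fin.cons z (fun _ => w 0) : Fin (t+1) → V) 0) c ≤ n := by
            have hd : T.dist (w 0) c = T.dist z c + 1 := tstep_dist hT h0
            simp only [Fin.cons_zero]
            omega
          exact (r1.trans r2).trans (ihn _ c hle)
    haveI : Nonempty (Fin (t+1) → V) := ⟨fun _ => hT.isConnected.nonempty.some⟩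
    refine ⟨fun u v => ?_⟩
    have r1 := key (T.dist (u 0) (v 0)) u (v 0) le_rfl
    have r2 : (SierpinskiGraph T (t+1)).Reachable (Fin.cons (v 0) (Fin.tail v))
        (Fin.cons (v 0) (fun _ => v 0)) := sg_reach_cons ih _ _
    rw [Fin.cons_self_tail, cons_const] at r2
    exact r1.trans r2.symm

lemma sg_dist_cons (hT : T.IsTree) (a : V) (u v : Fin t → V) :
    (SierpinskiGraph T (t+1)).dist (Fin.cons a u) (Fin.cons a v) =
      (SierpinskiGraph T t).dist u v := by
  classical
  apply le_antisymm
  · exact dist_le_of_weakHom (fun w : Fin t → V => (Fin.cons a w : Fin (t+1) → V))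
      (sg_hom_up a) ((sg_connected hT t) u v)
  · set ρ : (Fin (t+1) → V) → (Fin t → V) :=
      fun w => if w 0 = a then Fin.tail w else fun _ => tstep T a (w 0) with hρ
    have hweak : ∀ ⦃p q : Fin (t+1) → V⦄, (SierpinskiGraph T (t+1)).Adj p q →
        ρ p = ρ q ∨ (SierpinskiGraph T t).Adj (ρ p) (ρ q) := by
      intro p q hpq
      by_cases h0 : p 0 = q 0
      · by_cases ha : p 0 = a
        · right
          have hqa : q 0 = a := h0 ▸ ha
          simp only [hρ, if_pos ha, if_pos hqa]
          exact sg_adj_same_head hpq h0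
        · left
          have hqa : ¬ q 0 = a := h0 ▸ ha
          simp only [hρ, if_neg ha, if_neg hqa, h0]
      · obtain ⟨hTadj, hu, hv⟩ := sg_adj_ne_head hpq h0
        left
        by_cases ha : p 0 = a
        · have hqa : ¬ q 0 = a := fun hc => h0 (ha.trans hc.symm)
          have h1 : tstep T a (q 0) = q 0 := tstep_eq_of_adj hT (ha ▸ hTadj)
          simp only [hρ, if_pos ha, if_neg hqa, hu, h1]
        · by_cases hqa : q 0 = a
          · have h1 : tstep T a (p 0) = p 0 := tstep_eq_of_adj hT (hqa ▸ hTadj).symm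
            simp only [hρ, if_neg ha, if_pos hqa, hv, h1]
          · have h1 : tstep T a (p 0) = tstep T a (q 0) :=
              tstep_congr hT ha hqa (fun hc => ha hc.symm) hTadj
            simp only [hρ, if_neg ha, if_neg hqa, h1]
    have := dist_le_of_weakHom ρ hweak
      ((sg_connected hT (t+1)) (Fin.cons a u) (Fin.cons a v))
    simpa only [hρ, Fin.cons_zero, if_pos rfl, Fin.tail_cons, ↓reduceIte] using this

end Sierp2


section Cross
variable {V : Type*} {T : SimpleGraph V} {t : ℕ}

lemma sg_cut (hT : T.IsTree) {a z : V} (hadj : T.Adj a z)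
    {U W : Fin (t+1) → V} (hU : Tside T z a (U 0)) (hW : ¬ Tside T z a (W 0)) :
    (SierpinskiGraph T (t+1)).dist U W =
      (SierpinskiGraph T (t+1)).dist U (Fin.cons a (fun _ => z)) + 1 +
      (SierpinskiGraph T (t+1)).dist (Fin.cons z (fun _ => a)) W := by
  refine cut_dist (S := fun w => Tside T z a (w 0)) (sg_connected hT (t+1))
    (sg_adj_bridge hadj) ?_ hU hW
  intro p q hpq hp hq
  have h0 : p 0 ≠ q 0 := fun h => hq (show Tside T z a (q 0) by rw [← h]; exact hp)
  obtain ⟨hTadj, hu, hv⟩ := sg_adj_ne_head hpq h0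
  obtain ⟨h1, h2⟩ := tside_cross hT hadj hTadj hp hq
  constructor
  · calc p = Fin.cons (p 0) (Fin.tail p) := (Fin.cons_self_tail p).symm
      _ = Fin.cons a (fun _ => z) := by rw [hu, h1, h2]
  · calc q = Fin.cons (q 0) (Fin.tail q) := (Fin.cons_self_tail q).symm
      _ = Fin.cons z (fun _ => a) := by rw [hv, h1, h2]

lemma sg_cross (hT : T.IsTree)
    (R1 : ∀ x y : V, (SierpinskiGraph T t).dist (fun _ => x) (fun _ => y) =
      (2^t - 1) * T.dist x y) :
    ∀ (k : ℕ), 1 ≤ k → ∀ (a b : V), T.dist a b = k → ∀ (u v : Fin t → V),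
      (SierpinskiGraph T (t+1)).dist (Fin.cons a u) (Fin.cons b v) =
        (SierpinskiGraph T t).dist u (fun _ => tstep T a b) +
        (SierpinskiGraph T t).dist (fun _ => tstep T b a) v +
        k + (k - 1) * (2 * (2^t - 1)) := by
  intro k
  induction k with
  | zero => omega
  | succ m ihm =>
    intro _ a b hab u v
    have hne : a ≠ b := by
      rintro rfl
      rw [SimpleGraph.dist_self] at hab
      omega
    set z := tstep T a b with hz
    have hadj : T.Adj a z := tstep_adj hT hne
    have hdzb : T.dist a b = T.dist z b + 1 := tstep_dist hT hne
    have hbz : ¬ Tside T z a b :=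
      fun hb => tside_not_both hT hadj b ⟨tstep_side hT hne, hb⟩
    have hcut := sg_cut (t := t) hT hadj (U := Fin.cons a u) (W := Fin.cons b v)
      (by simpa using tside_self z a) (by simpa using hbz)
    have hcons1 : (SierpinskiGraph T (t+1)).dist (Fin.cons a u) (Fin.cons a (fun _ => z)) =
        (SierpinskiGraph T t).dist u (fun _ => z) := sg_dist_cons hT a u _
    rcases Nat.eq_zero_or_pos m with rfl | hm
    · -- base : a and b adjacent
      have hzb : z = b := by
        have : T.dist z b = 0 := by omega
        exact (hT.isConnected.dist_eq_zero_iff).mp this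
      have hTab : T.Adj a b := hzb ▸ hadj
      have hba : tstep T b a = a := tstep_eq_of_adj hT hTab.symm
      have hcons2 : (SierpinskiGraph T (t+1)).dist (Fin.cons z (fun _ => a)) (Fin.cons b v) =
          (SierpinskiGraph T t).dist (fun _ => a) v := by
        rw [hzb]; exact sg_dist_cons hT b _ v
      rw [hcut, hcons1, hcons2, hba]
      omega
    · -- inductive step
      obtain ⟨m', rfl⟩ : ∃ m', m = m' + 1 := ⟨m - 1, by omega⟩
      have hzb : z ≠ b := by
        intro h
        rw [h, SimpleGraph.dist_self] at hdzb
        omega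
      have hrest := ihm hm z b (by omega) (fun _ => a) v
      simp only [Nat.add_sub_cancel] at hrest
      set z2 := tstep T z b with hz2
      have hadj2 : T.Adj z z2 := tstep_adj hT hzb
      have hbz2 : tstep T b z = tstep T b a := by
        refine tstep_congr hT hzb hne ?_ hadj.symm
        exact fun h => hzb h.symm
      rw [hbz2] at hrest
      have hd2 : T.dist z b = T.dist z2 b + 1 := tstep_dist hT hzb
      have haz2 : T.dist a z2 = 2 := by
        have h1 : T.dist a z = 1 := SimpleGraph.dist_eq_one_iff_adj.mpr hadj
        have h2 : T.dist z z2 = 1 := SimpleGraph.dist_eq_one_iff_adj.mpr hadj2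
        have t1 := hT.isConnected.dist_triangle (u := a) (v := z) (w := z2)
        have t2 := hT.isConnected.dist_triangle (u := a) (v := z2) (w := b)
        omega
      have hR1 : (SierpinskiGraph T t).dist (fun _ => a) (fun _ => z2) = (2^t - 1) * 2 := by
        rw [R1 a z2, haz2]
      rw [hR1] at hrest
      rw [hcut, hcons1, hrest]
      simp only [Nat.add_sub_cancel]
      have hQ1 : (m' + 1) * (2 * (2^t - 1)) = m' * (2 * (2^t - 1)) + 2 * (2^t - 1) :=
        Nat.succ_mul _ _
      have hQ3 : (2^t - 1) * 2 = 2 * (2^t - 1) := Nat.mul_comm _ _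
      omega

end Cross


section Master
variable {V : Type*} [Finite V] {T : SimpleGraph V}

lemma sg_dist_zero (u v : Fin 0 → V) : (SierpinskiGraph T 0).dist u v = 0 := by
  have : u = v := funext fun i => i.elim0
  rw [this]
  exact SimpleGraph.dist_self

lemma pow_ge (t : ℕ) : t + 1 ≤ 2 ^ t := Nat.lt_two_pow_self (n := t)

lemma sg_master (hT : T.IsTree) {d2 : ℕ} (hd2 : graphDiam T = d2 + 2) : ∀ t : ℕ,
    (∀ x y : V, (SierpinskiGraph T t).dist (fun _ => x) (fun _ => y) =
        (2^t - 1) * T.dist x y) ∧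
    (∀ (c : V) (u : Fin t → V), (SierpinskiGraph T t).dist u (fun _ => c) ≤
        (2^t - 1) * eccent T c + d2 * (2^t - t - 1)) ∧
    (∀ c : V, ∃ u : Fin t → V, (2^t - 1) * eccent T c + d2 * (2^t - t - 1) ≤
        (SierpinskiGraph T t).dist u (fun _ => c)) := by
  haveI : Nonempty V := hT.isConnected.nonempty
  intro t
  induction t with
  | zero =>
    refine ⟨fun x y => by simp [sg_dist_zero], fun c u => by simp [sg_dist_zero],
      fun c => ⟨fun _ => c, by simp⟩⟩
  | succ t ih =>
    obtain ⟨R1, R2a, R2b⟩ := ih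
    have hP1 : 1 ≤ 2 ^ t := Nat.one_le_two_pow
    have hPt : t + 1 ≤ 2 ^ t := pow_ge t
    have hpow : 2 ^ (t+1) = 2 * 2 ^ t := by rw [pow_succ]; ring
    have hP2 : 2 ^ (t+1) - 1 = 2 * (2^t - 1) + 1 := by omega
    have hQ2 : 2 ^ (t+1) - (t+1) - 1 = (2^t - t - 1) + (2^t - 1) := by omega
    refine ⟨?_, ?_, ?_⟩
    · -- R1 at t+1
      intro x y
      by_cases hxy : x = y
      · subst hxy
        have h1 : (SierpinskiGraph T (t+1)).dist (fun _ => x) (fun _ => x) = 0 :=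
          SimpleGraph.dist_self
        have h2 : T.dist x x = 0 := SimpleGraph.dist_self
        rw [h1, h2, Nat.mul_zero]
      · obtain ⟨k', hk'⟩ : ∃ k', T.dist x y = k' + 1 :=
          ⟨T.dist x y - 1, by have := hT.isConnected.pos_dist_of_ne hxy; omega⟩
        have hcr := sg_cross hT R1 (k'+1) (by omega) x y hk' (fun _ => x) (fun _ => y)
        rw [← cons_const x, ← cons_const y, hcr]
        have e1 : (SierpinskiGraph T t).dist (fun _ => x) (fun _ => tstep T x y) =
            (2^t - 1) * 1 := by
          rw [R1]
          congr 1
          exact SimpleGraph.dist_eq_one_iff_adj.mpr (tstep_adj hT hxy)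
        have e2 : (SierpinskiGraph T t).dist (fun _ => tstep T y x) (fun _ => y) =
            (2^t - 1) * 1 := by
          rw [R1]
          have : T.dist (tstep T y x) y = 1 := by
            rw [SimpleGraph.dist_comm]
            exact SimpleGraph.dist_eq_one_iff_adj.mpr (tstep_adj hT (Ne.symm hxy))
          rw [this]
        rw [e1, e2, hk', hP2]
        have e3 : (2 * (2^t - 1) + 1) * (k' + 1) =
            k' * (2 * (2^t - 1)) + k' + 2 * (2^t - 1) + 1 := by ring
        have e4 : (k' + 1 - 1) * (2 * (2^t - 1)) = k' * (2 * (2^t - 1)) := by simp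
        omega
    · -- R2a at t+1
      intro c w
      rw [← Fin.cons_self_tail w, ← cons_const c]
      by_cases h0 : w 0 = c
      · rw [h0, sg_dist_cons hT]
        have h1 := R2a c (Fin.tail w)
        have hB : d2 * ((2^t - t - 1) + (2^t - 1)) = d2 * (2^t - t - 1) + d2 * (2^t - 1) := by
          ring
        have hC : (2 * (2^t - 1) + 1) * eccent T c =
            2 * ((2^t - 1) * eccent T c) + eccent T c := by ring
        rw [hP2, hQ2]
        omega
      · obtain ⟨k', hk'⟩ : ∃ k', T.dist (w 0) c = k' + 1 :=
          ⟨T.dist (w 0) c - 1, by have := hT.isConnected.pos_dist_of_ne h0; omega⟩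
        have hcr := sg_cross hT R1 (k'+1) (by omega) (w 0) c hk' (Fin.tail w) (fun _ => c)
        rw [hcr]
        have e2 : (SierpinskiGraph T t).dist (fun _ => tstep T c (w 0)) (fun _ => c) =
            (2^t - 1) * 1 := by
          rw [R1]
          have : T.dist (tstep T c (w 0)) c = 1 := by
            rw [SimpleGraph.dist_comm]
            exact SimpleGraph.dist_eq_one_iff_adj.mpr (tstep_adj hT (Ne.symm h0))
          rw [this]
        have e1 := R2a (tstep T (w 0) c) (Fin.tail w)
        rw [e2, hP2, hQ2]
        have hkc : k' + 1 ≤ eccent T c := by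
          have := tree_dist_le_ecc' (T := T) c (w 0)
          omega
        obtain ⟨ec', hec'⟩ : ∃ ec', eccent T c = ec' + 1 := ⟨eccent T c - 1, by omega⟩
        have hBB : d2 * ((2^t - t - 1) + (2^t - 1)) = d2 * (2^t - t - 1) + d2 * (2^t - 1) := by
          ring
        have e4 : (k' + 1 - 1) * (2 * (2^t - 1)) = k' * (2 * (2^t - 1)) := by simp
        rcases tree_step_ecc_bound hT h0 with hcase | hcase
        · -- ecc z + 1 ≤ d2 + 2
          rw [hd2] at hcase
          have b1 : (2^t - 1) * eccent T (tstep T (w 0) c) ≤ (2^t - 1) * (d2 + 1) :=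
            Nat.mul_le_mul_left (2^t - 1) (by omega)
          have b2 : k' * (2 * (2^t - 1)) ≤ ec' * (2 * (2^t - 1)) :=
            Nat.mul_le_mul_right (2 * (2^t - 1)) (by omega)
          have b3 : (2^t - 1) * (d2 + 1) = d2 * (2^t - 1) + (2^t - 1) := by ring
          have b4 : (2 * (2^t - 1) + 1) * eccent T c =
              ec' * (2 * (2^t - 1)) + ec' + 2 * (2^t - 1) + 1 := by rw [hec']; ring
          omega
        · -- ecc z + dist ≤ ecc c + 1
          rw [hk'] at hcase
          have b1 : (2^t - 1) * eccent T (tstep T (w 0) c) + k' * (2 * (2^t - 1)) ≤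
              (2^t - 1) * (eccent T c + k') := by
            have e5 : (2^t - 1) * (eccent T c + k') =
                (2^t - 1) * (eccent T c - k') + k' * (2 * (2^t - 1)) := by
              have h6 : eccent T c + k' = (eccent T c - k') + 2 * k' := by omega
              rw [h6]; ring
            have b6 : (2^t - 1) * eccent T (tstep T (w 0) c) ≤
                (2^t - 1) * (eccent T c - k') :=
              Nat.mul_le_mul_left (2^t - 1) (by omega)
            omega
          have b2 : (2^t - 1) * (eccent T c + k') + (2^t - 1) ≤
              (2^t - 1) * (2 * eccent T c) := by
            have e7 : (2^t - 1) * (eccent T c + k') + (2^t - 1) =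
                (2^t - 1) * (eccent T c + k' + 1) := by ring
            rw [e7]
            exact Nat.mul_le_mul_left (2^t - 1) (by omega)
          have b4 : (2 * (2^t - 1) + 1) * eccent T c =
              (2^t - 1) * (2 * eccent T c) + eccent T c := by ring
          omega
    · -- R2b at t+1
      intro c
      obtain ⟨p, q, hpq⟩ := exists_graphDiam T
      obtain ⟨a, hca, haD⟩ := tree_ecc_endpoint hT hpq c
      have hac : a ≠ c := by
        rintro rfl
        rw [← hca, SimpleGraph.dist_self] at haD
        omega
      have hezlow : d2 + 1 ≤ eccent T (tstep T a c) := by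
        have := tree_step_ecc_lower hT hac haD
        omega
      obtain ⟨u0, hu0⟩ := R2b (tstep T a c)
      refine ⟨Fin.cons a u0, ?_⟩
      have hkc : T.dist a c = eccent T c := by
        rw [SimpleGraph.dist_comm]; exact hca
      have hecpos : 1 ≤ eccent T c := by
        have := hT.isConnected.pos_dist_of_ne hac
        omega
      obtain ⟨ec', hec'⟩ : ∃ ec', eccent T c = ec' + 1 := ⟨eccent T c - 1, by omega⟩
      have hcr := sg_cross hT R1 (ec' + 1) (by omega) a c (by omega) u0 (fun _ => c)
      rw [← cons_const c, hcr]
      have e2 : (SierpinskiGraph T t).dist (fun _ => tstep T c a) (fun _ => c) =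
          (2^t - 1) * 1 := by
        rw [R1]
        have : T.dist (tstep T c a) c = 1 := by
          rw [SimpleGraph.dist_comm]
          exact SimpleGraph.dist_eq_one_iff_adj.mpr (tstep_adj hT (Ne.symm hac))
        rw [this]
      rw [e2, hP2, hQ2]
      have b1 : (2^t - 1) * (d2 + 1) ≤ (2^t - 1) * eccent T (tstep T a c) :=
        Nat.mul_le_mul_left (2^t - 1) hezlow
      have b2 : (ec' + 1 - 1) * (2 * (2^t - 1)) = ec' * (2 * (2^t - 1)) := by simp
      have b3 : (2 * (2^t - 1) + 1) * eccent T c =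
          ec' * (2 * (2^t - 1)) + ec' + 2 * (2^t - 1) + 1 := by rw [hec']; ring
      have b4 : d2 * ((2^t - t - 1) + (2^t - 1)) = d2 * (2^t - t - 1) + d2 * (2^t - 1) := by
        ring
      have b5 : (2^t - 1) * (d2 + 1) = d2 * (2^t - 1) + (2^t - 1) := by ring
      omega

end Master


section Diam
variable {V : Type*} [Finite V] {T : SimpleGraph V}

/-- the claimed diameter of `S(T,t)` (with `D = d2 + 2`) -/
def gfun (d2 : ℕ) : ℕ → ℕ
  | 0 => 0
  | (t+1) => 4 * (2^t - 1) * (d2 + 1) + 2 * d2 * (2^t - t - 1) + (d2 + 2)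

lemma gfun_mono (d2 t : ℕ) : gfun d2 t ≤ gfun d2 (t+1) := by
  cases t with
  | zero => exact Nat.zero_le _
  | succ t =>
    show 4 * (2^t - 1) * (d2 + 1) + 2 * d2 * (2^t - t - 1) + (d2 + 2) ≤
      4 * (2^(t+1) - 1) * (d2 + 1) + 2 * d2 * (2^(t+1) - (t+1) - 1) + (d2 + 2)
    have hP1 : 1 ≤ 2 ^ t := Nat.one_le_two_pow
    have hPt : t + 1 ≤ 2 ^ t := pow_ge t
    have hpow : 2 ^ (t+1) = 2 * 2 ^ t := by rw [pow_succ]; ring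
    have b1 : 4 * (2^t - 1) * (d2 + 1) ≤ 4 * (2^(t+1) - 1) * (d2 + 1) :=
      Nat.mul_le_mul_right _ (Nat.mul_le_mul_left 4 (by omega))
    have b2 : 2 * d2 * (2^t - t - 1) ≤ 2 * d2 * (2^(t+1) - (t+1) - 1) :=
      Nat.mul_le_mul_left _ (by omega)
    omega

lemma sg_diam_ub (hT : T.IsTree) {d2 : ℕ} (hd2 : graphDiam T = d2 + 2) :
    ∀ (t : ℕ) (u v : Fin t → V), (SierpinskiGraph T t).dist u v ≤ gfun d2 t := by
  haveI : Nonempty V := hT.isConnected.nonempty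
  intro t
  induction t with
  | zero => intro u v; simp [sg_dist_zero, gfun]
  | succ t ih =>
    intro u v
    obtain ⟨R1, R2a, R2b⟩ := sg_master hT hd2 t
    rw [← Fin.cons_self_tail u, ← Fin.cons_self_tail v]
    by_cases h0 : u 0 = v 0
    · rw [h0, sg_dist_cons hT]
      exact (ih _ _).trans (gfun_mono d2 t)
    · obtain ⟨k', hk'⟩ : ∃ k', T.dist (u 0) (v 0) = k' + 1 :=
        ⟨T.dist (u 0) (v 0) - 1, by have := hT.isConnected.pos_dist_of_ne h0; omega⟩
      have hcr := sg_cross hT R1 (k'+1) (by omega) (u 0) (v 0) hk' (Fin.tail u) (Fin.tail v)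
      rw [hcr]
      have e4 : (k' + 1 - 1) * (2 * (2^t - 1)) = k' * (2 * (2^t - 1)) := by simp
      have hA := R2a (tstep T (u 0) (v 0)) (Fin.tail u)
      have hB : (SierpinskiGraph T t).dist (fun _ => tstep T (v 0) (u 0)) (Fin.tail v) ≤
          (2^t - 1) * eccent T (tstep T (v 0) (u 0)) + d2 * (2^t - t - 1) := by
        rw [SimpleGraph.dist_comm]
        exact R2a (tstep T (v 0) (u 0)) (Fin.tail v)
      -- tree bounds
      have hkD : k' + 1 ≤ d2 + 2 := by
        have := dist_le_graphDiam T (u 0) (v 0)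
        omega
      have hEa : eccent T (tstep T (u 0) (v 0)) + (k' + 1) ≤ 2 * d2 + 3 := by
        rcases tree_step_ecc_bound hT h0 with hc | hc
        · omega
        · have h5 : eccent T (v 0) ≤ d2 + 2 := by
            have := eccent_le_graphDiam T (v 0)
            omega
          omega
      have hEb : eccent T (tstep T (v 0) (u 0)) + (k' + 1) ≤ 2 * d2 + 3 := by
        have h6 : T.dist (v 0) (u 0) = k' + 1 := by
          rw [SimpleGraph.dist_comm]; exact hk'
        rcases tree_step_ecc_bound hT (Ne.symm h0) with hc | hc
        · omega
        · have h5 : eccent T (u 0) ≤ d2 + 2 := by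
            have := eccent_le_graphDiam T (u 0)
            omega
          omega
      show _ ≤ 4 * (2^t - 1) * (d2 + 1) + 2 * d2 * (2^t - t - 1) + (d2 + 2)
      have b1 : (2^t - 1) * eccent T (tstep T (u 0) (v 0)) +
          (2^t - 1) * eccent T (tstep T (v 0) (u 0)) + k' * (2 * (2^t - 1)) =
          (2^t - 1) * (eccent T (tstep T (u 0) (v 0)) +
            eccent T (tstep T (v 0) (u 0)) + 2 * k') := by ring
      have b2 : (2^t - 1) * (eccent T (tstep T (u 0) (v 0)) +
            eccent T (tstep T (v 0) (u 0)) + 2 * k') ≤ (2^t - 1) * (4 * d2 + 4) :=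
        Nat.mul_le_mul_left _ (by omega)
      have b3 : 4 * (2^t - 1) * (d2 + 1) = (2^t - 1) * (4 * d2 + 4) := by ring
      have b4 : 2 * d2 * (2^t - t - 1) = d2 * (2^t - t - 1) + d2 * (2^t - t - 1) := by ring
      omega

lemma sg_diam_lb (hT : T.IsTree) {d2 : ℕ} (hd2 : graphDiam T = d2 + 2) (t : ℕ) :
    ∃ u v : Fin (t+1) → V, gfun d2 (t+1) ≤ (SierpinskiGraph T (t+1)).dist u v := by
  haveI : Nonempty V := hT.isConnected.nonempty
  obtain ⟨R1, R2a, R2b⟩ := sg_master hT hd2 t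
  obtain ⟨p, q, hpq⟩ := exists_graphDiam T
  have hne : p ≠ q := by
    intro h
    rw [h, SimpleGraph.dist_self] at hpq
    omega
  have heccp : eccent T p = graphDiam T := by
    have h1 := eccent_le_graphDiam T p
    have h2 := dist_le_eccent T p q
    omega
  have heccq : eccent T q = graphDiam T := by
    have h1 := eccent_le_graphDiam T q
    have h2 := dist_le_eccent T q p
    have h3 : T.dist q p = T.dist p q := SimpleGraph.dist_comm
    omega
  have hzp : d2 + 1 ≤ eccent T (tstep T p q) := by
    have := tree_step_ecc_lower hT hne heccp
    omega
  have hzq : d2 + 1 ≤ eccent T (tstep T q p) := by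
    have := tree_step_ecc_lower hT (Ne.symm hne) heccq
    omega
  obtain ⟨u0, hu0⟩ := R2b (tstep T p q)
  obtain ⟨v0, hv0⟩ := R2b (tstep T q p)
  refine ⟨Fin.cons p u0, Fin.cons q v0, ?_⟩
  have hk : T.dist p q = (d2 + 1) + 1 := by omega
  have hcr := sg_cross hT R1 (d2 + 2) (by omega) p q (by omega) u0 v0
  rw [hcr]
  have e4 : (d2 + 2 - 1) * (2 * (2^t - 1)) = (d2 + 1) * (2 * (2^t - 1)) := by simp
  have hBc : (SierpinskiGraph T t).dist (fun _ => tstep T q p) v0 =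
      (SierpinskiGraph T t).dist v0 (fun _ => tstep T q p) := SimpleGraph.dist_comm
  have b1 : (2^t - 1) * (d2 + 1) ≤ (2^t - 1) * eccent T (tstep T p q) :=
    Nat.mul_le_mul_left _ hzp
  have b2 : (2^t - 1) * (d2 + 1) ≤ (2^t - 1) * eccent T (tstep T q p) :=
    Nat.mul_le_mul_left _ hzq
  show 4 * (2^t - 1) * (d2 + 1) + 2 * d2 * (2^t - t - 1) + (d2 + 2) ≤ _
  have b3 : 4 * (2^t - 1) * (d2 + 1) =
      (2^t - 1) * (d2 + 1) + (2^t - 1) * (d2 + 1) + (d2 + 1) * (2 * (2^t - 1)) := by ring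
  have b4 : 2 * d2 * (2^t - t - 1) = d2 * (2^t - t - 1) + d2 * (2^t - t - 1) := by ring
  omega

end Diam


lemma tree_diam_ge_two {V : Type*} [Fintype V] {T : SimpleGraph V} (hT : T.IsTree)
    (hcard : 3 ≤ Fintype.card V) : 2 ≤ graphDiam T := by
  classical
  obtain ⟨x, y, hxy⟩ := Fintype.exists_pair_of_one_lt_card (α := V) (by omega)
  have hcard2 : ({x, y} : Finset V).card ≤ 2 := by
    apply (Finset.card_insert_le _ _).trans
    simp
  have hz : ∃ z, z ∉ ({x, y} : Finset V) := by
    by_contra h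
    push_neg at h
    have : (Finset.univ : Finset V) ⊆ {x, y} := fun z _ => h z
    have := Finset.card_le_card this
    rw [Finset.card_univ] at this
    omega
  obtain ⟨z, hzmem⟩ := hz
  simp only [Finset.mem_insert, Finset.mem_singleton, not_or] at hzmem
  obtain ⟨hzx, hzy⟩ := hzmem
  by_contra h
  push_neg at h
  have hadj : ∀ a b : V, a ≠ b → T.Adj a b := by
    intro a b hab
    have h1 : 0 < T.dist a b := hT.isConnected.pos_dist_of_ne hab
    have h2 : T.dist a b ≤ graphDiam T := dist_le_graphDiam T a b
    have h3 : T.dist a b = 1 := by omega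
    exact SimpleGraph.dist_eq_one_iff_adj.mp h3
  have hbridge := (SimpleGraph.isAcyclic_iff_forall_adj_isBridge.mp hT.IsAcyclic)
    (hadj x y hxy)
  rw [SimpleGraph.isBridge_iff] at hbridge
  refine hbridge ?_
  have a1 : (T \ SimpleGraph.fromEdgeSet {s(x, y)}).Adj x z := by
    simp only [SimpleGraph.sdiff_adj, SimpleGraph.fromEdgeSet_adj]
    refine ⟨hadj x z (Ne.symm hzx), ?_⟩
    rintro ⟨h1, -⟩
    simp only [Set.mem_singleton_iff] at h1
    rcases Sym2.eq_iff.mp h1 with ⟨h2, h3⟩ | ⟨h2, h3⟩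
    · exact hzy h3
    · exact hxy h2
  have a2 : (T \ SimpleGraph.fromEdgeSet {s(x, y)}).Adj z y := by
    simp only [SimpleGraph.sdiff_adj, SimpleGraph.fromEdgeSet_adj]
    refine ⟨hadj z y hzy, ?_⟩
    rintro ⟨h1, -⟩
    simp only [Set.mem_singleton_iff] at h1
    rcases Sym2.eq_iff.mp h1 with ⟨h2, h3⟩ | ⟨h2, h3⟩
    · exact hzx h2
    · exact hxy h3.symm
  exact ⟨.cons a1 (.cons a2 .nil)⟩

end SierpAux

/-- for a finite tree `T` with at least three vertices and any `t ≥ 1`: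
`D(S(T,t)) = (3·2^t − 2t − 3)·D(T) − 4·(2^t − t − 1)`. -/
theorem stmt_16 {V : Type*} [Fintype V] (T : SimpleGraph V) (hT : T.IsTree)
    (hcard : 3 ≤ Fintype.card V) (t : ℕ) (ht : 1 ≤ t) :
    graphDiam (SierpinskiGraph T t) =
      (3 * 2 ^ t - 2 * t - 3) * graphDiam T - 4 * (2 ^ t - t - 1) := by
  obtain ⟨s, rfl⟩ : ∃ s, t = s + 1 := ⟨t - 1, by omega⟩
  haveI : Nonempty V := hT.isConnected.nonempty
  haveI : Nonempty (Fin (s+1) → V) := ⟨fun _ => Classical.arbitrary V⟩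
  obtain ⟨d2, hd2⟩ : ∃ d2, graphDiam T = d2 + 2 :=
    ⟨graphDiam T - 2, by have := SierpAux.tree_diam_ge_two hT hcard; omega⟩
  have hdiam : graphDiam (SierpinskiGraph T (s+1)) = SierpAux.gfun d2 (s+1) := by
    apply le_antisymm
    · exact SierpAux.graphDiam_le _ (fun u v => SierpAux.sg_diam_ub hT hd2 (s+1) u v)
    · obtain ⟨u, v, huv⟩ := SierpAux.sg_diam_lb hT hd2 s
      exact huv.trans (SierpAux.dist_le_graphDiam _ u v)
  rw [hdiam, hd2]
  show 4 * (2^s - 1) * (d2 + 1) + 2 * d2 * (2^s - s - 1) + (d2 + 2) =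
    (3 * 2 ^ (s+1) - 2 * (s+1) - 3) * (d2 + 2) - 4 * (2 ^ (s+1) - (s+1) - 1)
  have hpow : 2 ^ (s+1) = 2 * 2 ^ s := by rw [pow_succ]; ring
  obtain ⟨S', hS'⟩ : ∃ S', 2 ^ s = S' + s + 1 :=
    ⟨2 ^ s - s - 1, by have := SierpAux.pow_ge s; omega⟩
  rw [hpow, hS']
  have h1 : 3 * (2 * (S' + s + 1)) - 2 * (s+1) - 3 = 6 * S' + 4 * s + 1 := by omega
  have h2 : 2 * (S' + s + 1) - (s+1) - 1 = 2 * S' + s := by omega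
  have h3 : S' + s + 1 - 1 = S' + s := by omega
  have h4 : S' + s + 1 - s - 1 = S' := by omega
  rw [h1, h2, h3, h4]
  have key : (6 * S' + 4 * s + 1) * (d2 + 2) =
      4 * (2 * S' + s) + (4 * (S' + s) * (d2 + 1) + 2 * d2 * S' + (d2 + 2)) := by ring
  omega
end

section
/- For any tree T with at least three vertices and any positive integer t, the radius of the generalized Sierpiński graph S(T,t) satisfies: r(S(T,t)) = (1/2)·(3·2^t − 2t − 3)·D(T) − 2·(2^t − t − 1) if D(T) is even, and r(S(T,t)) = (1/2)·( (3·2^t − 2t − 3)·D(T) − 2^{t+2} + 4t + 5 ) if D(T) is odd, where D(T) is the diameter of T. -/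
section Development


open SimpleGraph
open scoped Classical

variable {V : Type*} {G : SimpleGraph V}

lemma cross_walk {P : V → Prop} {p q u v : V}
    (hcr : ∀ a b, G.Adj a b → P a → ¬ P b → a = p ∧ b = q)
    (w : G.Walk u v) (hu : P u) (hv : ¬ P v) :
    ∃ (w1 : G.Walk u p) (w2 : G.Walk q v), w1.length + 1 + w2.length = w.length := by
  induction w with
  | nil => exact absurd hu hv
  | @cons a x v' h w' ih =>
    by_cases hx : P x
    · obtain ⟨w1, w2, hl⟩ := ih hx hv
      refine ⟨Walk.cons h w1, w2, ?_⟩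
      simp only [Walk.length_cons]
      omega
    · obtain ⟨rfl, rfl⟩ := hcr _ _ h hu hx
      exact ⟨Walk.nil, w', by simp [Walk.length_cons]; omega⟩

lemma cut_dist (hconn : G.Connected) {P : V → Prop} {p q : V} (hpq : G.Adj p q)
    (hcr : ∀ a b, G.Adj a b → P a → ¬ P b → a = p ∧ b = q)
    {u v : V} (hu : P u) (hv : ¬ P v) :
    G.dist u v = G.dist u p + 1 + G.dist q v := by
  refine le_antisymm ?_ ?_
  · have h1 := hconn.dist_triangle (u := u) (v := p) (w := v)
    have h2 := hconn.dist_triangle (u := p) (v := q) (w := v)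
    have h3 : G.dist p q ≤ 1 := by simpa using SimpleGraph.dist_le hpq.toWalk
    omega
  · obtain ⟨w, hw⟩ := hconn.exists_walk_length_eq_dist u v
    obtain ⟨w1, w2, hl⟩ := cross_walk hcr w hu hv
    have d1 := SimpleGraph.dist_le w1
    have d2 := SimpleGraph.dist_le w2
    omega

lemma walk_map_le {W' : Type*} {H : SimpleGraph W'} (f : V → W')
    (hf : ∀ a b, G.Adj a b → H.Adj (f a) (f b) ∨ f a = f b) {u v : V}
    (w : G.Walk u v) : ∃ w' : H.Walk (f u) (f v), w'.length ≤ w.length := by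
  induction w with
  | nil => exact ⟨Walk.nil, by simp⟩
  | @cons a x v' h w' ih =>
    obtain ⟨w2, hw2⟩ := ih
    rcases hf _ _ h with h' | h'
    · exact ⟨Walk.cons h' w2, by simp only [Walk.length_cons]; omega⟩
    · refine ⟨w2.copy h'.symm rfl, ?_⟩
      rw [Walk.length_copy]
      simp only [Walk.length_cons]; omega

lemma dist_map_le {W' : Type*} {H : SimpleGraph W'} (hconn : G.Connected) (f : V → W')
    (hf : ∀ a b, G.Adj a b → H.Adj (f a) (f b) ∨ f a = f b) (u v : V) :
    H.dist (f u) (f v) ≤ G.dist u v := by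
  obtain ⟨w, hw⟩ := hconn.exists_walk_length_eq_dist u v
  obtain ⟨w', hw'⟩ := walk_map_le f hf w
  have := SimpleGraph.dist_le w'
  omega

/-- the `p`-side of the edge `(p,q)` -/
def eside (G : SimpleGraph V) (p q : V) : V → Prop :=
  fun w => (G \ fromEdgeSet {s(p,q)}).Reachable w p

lemma not_reach_del (hac : G.IsAcyclic) {p q : V} (hpq : G.Adj p q) :
    ¬ (G \ fromEdgeSet {s(p,q)}).Reachable p q :=
  ((isAcyclic_iff_forall_adj_isBridge.mp hac) hpq)

lemma del_adj {p q a b : V} (h : G.Adj a b) (he : s(a,b) ≠ s(p,q)) :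
    (G \ fromEdgeSet {s(p,q)}).Adj a b := by
  simp only [sdiff_adj, fromEdgeSet_adj]
  exact ⟨h, by tauto⟩

lemma eside_p (p q : V) : eside G p q p := Reachable.refl p

lemma not_eside_q (hac : G.IsAcyclic) {p q : V} (hpq : G.Adj p q) : ¬ eside G p q q :=
  fun h => not_reach_del hac hpq h.symm

lemma eside_cross (hac : G.IsAcyclic) {p q : V} (hpq : G.Adj p q) :
    ∀ a b, G.Adj a b → eside G p q a → ¬ eside G p q b → a = p ∧ b = q := by
  intro a b hab ha hb
  by_cases he : s(a,b) = s(p,q)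
  · rw [Sym2.eq_iff] at he
    rcases he with ⟨rfl, rfl⟩ | ⟨rfl, rfl⟩
    · exact ⟨rfl, rfl⟩
    · exact absurd (Reachable.refl _) hb
  · exact absurd (((del_adj hab he).symm.reachable).trans ha) hb

lemma eside_dichot_aux {p q : V} {a b : V} (w : (G).Walk a b)
    (hb : eside G p q b ∨ (G \ fromEdgeSet {s(p,q)}).Reachable b q) :
    eside G p q a ∨ (G \ fromEdgeSet {s(p,q)}).Reachable a q := by
  induction w with
  | nil => exact hb
  | @cons a x b h w' ih =>
    by_cases he : s(a,x) = s(p,q)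
    · rw [Sym2.eq_iff] at he
      rcases he with ⟨rfl, rfl⟩ | ⟨rfl, rfl⟩
      · exact Or.inl (Reachable.refl _)
      · exact Or.inr (Reachable.refl _)
    · rcases ih hb with h' | h'
      · exact Or.inl (((del_adj h he).reachable).trans h')
      · exact Or.inr (((del_adj h he).reachable).trans h')

lemma eside_dichot (hconn : G.Connected) (p q w : V) :
    eside G p q w ∨ (G \ fromEdgeSet {s(p,q)}).Reachable w q := by
  obtain ⟨wk⟩ := hconn.preconnected w p
  exact eside_dichot_aux wk (Or.inl (Reachable.refl _))

lemma eside_dist (hconn : G.Connected) (hac : G.IsAcyclic) {p q : V} (hpq : G.Adj p q)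
    {u v : V} (hu : eside G p q u) (hv : ¬ eside G p q v) :
    G.dist u v = G.dist u p + 1 + G.dist q v :=
  cut_dist hconn hpq (eside_cross hac hpq) hu hv

lemma dist_of_eside (hconn : G.Connected) (hac : G.IsAcyclic) {p q : V} (hpq : G.Adj p q)
    {w : V} (hw : eside G p q w) : G.dist w q = G.dist w p + 1 := by
  have h := eside_dist hconn hac hpq hw (not_eside_q hac hpq)
  have h0 : G.dist q q = 0 := SimpleGraph.dist_self
  omega

lemma eside_swap (hconn : G.Connected) {p q : V} {w : V}
    (hw : ¬ eside G p q w) : eside G q p w := by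
  rcases eside_dichot hconn p q w with h | h
  · exact absurd h hw
  · unfold eside; rwa [Sym2.eq_swap]

lemma dist_of_not_eside (hconn : G.Connected) (hac : G.IsAcyclic) {p q : V} (hpq : G.Adj p q)
    {w : V} (hw : ¬ eside G p q w) : G.dist w p = G.dist w q + 1 :=
  dist_of_eside hconn hac hpq.symm (eside_swap hconn hw)

lemma not_eside_of_dist (hconn : G.Connected) (hac : G.IsAcyclic) {p q : V} (hpq : G.Adj p q)
    {w : V} (hw : G.dist w q + 1 = G.dist w p) : ¬ eside G p q w := by
  intro h
  have := dist_of_eside hconn hac hpq h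
  omega

lemma eside_of_dist (hconn : G.Connected) (hac : G.IsAcyclic) {p q : V} (hpq : G.Adj p q)
    {w : V} (hw : G.dist w p + 1 = G.dist w q) : eside G p q w := by
  by_contra h
  have := dist_of_not_eside hconn hac hpq h
  omega

/-- first step from `x` towards `z` -/
noncomputable def stp (G : SimpleGraph V) (x z : V) : V :=
  if h : ∃ y, G.Adj x y ∧ G.dist y z + 1 = G.dist x z then h.choose else x

lemma stp_spec (hconn : G.Connected) {x z : V} (hxz : x ≠ z) :
    G.Adj x (stp G x z) ∧ G.dist (stp G x z) z + 1 = G.dist x z := by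
  have hpos : 0 < G.dist x z := hconn.pos_dist_of_ne hxz
  obtain ⟨w, hw⟩ := hconn.exists_walk_length_eq_dist x z
  have h : ∃ y, G.Adj x y ∧ G.dist y z + 1 = G.dist x z := by
    cases w with
    | nil => exact absurd rfl hxz
    | @cons a y z' h w' =>
      refine ⟨y, h, ?_⟩
      have h1 : G.dist y z ≤ w'.length := SimpleGraph.dist_le w'
      have h2 : G.dist x z ≤ 1 + G.dist y z := by
        have h3 := hconn.dist_triangle (u := x) (v := y) (w := z)
        have h4 : G.dist x y ≤ 1 := by simpa using SimpleGraph.dist_le h.toWalk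
        omega
      simp only [Walk.length_cons] at hw
      omega
  rw [stp, dif_pos h]
  exact h.choose_spec

lemma stp_uniq (hconn : G.Connected) (hac : G.IsAcyclic) {x y z : V}
    (hxy : G.Adj x y) (hd : G.dist y z + 1 = G.dist x z) : y = stp G x z := by
  have hxz : x ≠ z := by
    intro h; subst h; simp [SimpleGraph.dist_self] at hd
  obtain ⟨ha, hd'⟩ := stp_spec hconn hxz
  set y' := stp G x z with hy'
  by_cases hyy : y = y'
  · exact hyy
  · exfalso
    have hz : ¬ eside G x y' z := by
      refine not_eside_of_dist hconn hac ha ?_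
      rw [SimpleGraph.dist_comm (u := z) (v := y'), SimpleGraph.dist_comm (u := z) (v := x)]
      exact hd'
    have h1 : G.dist y x = 1 := by
      rw [SimpleGraph.dist_comm]; exact SimpleGraph.dist_eq_one_iff_adj.mpr hxy
    by_cases hy : eside G x y' y
    · have := eside_dist hconn hac ha hy hz
      omega
    · have h2 := dist_of_not_eside hconn hac ha hy
      have h3 : G.dist y y' = 0 := by omega
      exact hyy ((hconn y y').dist_eq_zero_iff.mp h3)

lemma stp_adj_self (hconn : G.Connected) (hac : G.IsAcyclic) {x z : V} (hxz : G.Adj x z) :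
    stp G x z = z := by
  refine (stp_uniq hconn hac hxz ?_).symm
  have h1 : G.dist x z = 1 := SimpleGraph.dist_eq_one_iff_adj.mpr hxz
  have h2 : G.dist z z = 0 := SimpleGraph.dist_self
  omega

lemma stp_coh (hconn : G.Connected) (hac : G.IsAcyclic) {x z z' : V}
    (hxz : x ≠ z) (hzz' : G.Adj z z') (hd : G.dist x z' = G.dist x z + 1) :
    stp G x z' = stp G x z := by
  obtain ⟨ha, hd'⟩ := stp_spec hconn (z := z) hxz
  refine (stp_uniq hconn hac ha ?_).symm
  have h1 : G.dist (stp G x z) z' ≤ G.dist (stp G x z) z + 1 := by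
    have h3 := hconn.dist_triangle (u := stp G x z) (v := z) (w := z')
    have h4 : G.dist z z' ≤ 1 := by simpa using SimpleGraph.dist_le hzz'.toWalk
    omega
  have h2 : G.dist x z' ≤ 1 + G.dist (stp G x z) z' := by
    have h3 := hconn.dist_triangle (u := x) (v := stp G x z) (w := z')
    have h4 : G.dist x (stp G x z) ≤ 1 := by simpa using SimpleGraph.dist_le ha.toWalk
    omega
  omega

lemma stp_coh' (hconn : G.Connected) (hac : G.IsAcyclic) {x z z' : V}
    (hxz : x ≠ z) (hxz' : x ≠ z') (hzz' : G.Adj z z') :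
    stp G x z = stp G x z' := by
  rcases eside_dichot hconn z z' x with h | h
  · have := dist_of_eside hconn hac hzz' h
    exact (stp_coh hconn hac hxz hzz' this).symm
  · have h' : ¬ eside G z z' x := fun hh => (not_reach_del hac hzz') (hh.symm.trans h)
    have := dist_of_not_eside hconn hac hzz' h'
    exact stp_coh hconn hac hxz' hzz'.symm this

section Sierp


variable {V : Type*} {T : SimpleGraph V}

local notation "SG" => SierpinskiGraph T

lemma adj_zero {u v : Fin 0 → V} : ¬ (SG 0).Adj u v := by
  rintro ⟨i, -⟩; exact i.elim0

lemma adj_one {u v : Fin 1 → V} : (SG 1).Adj u v ↔ T.Adj (u 0) (v 0) := by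
  constructor
  · rintro ⟨i, h1, -, -⟩
    rwa [Subsingleton.elim (0 : Fin 1) i]
  · intro h
    refine ⟨0, h, fun j hj => ?_, fun j hj => ?_⟩
    · rw [Subsingleton.elim j (0 : Fin 1)] at hj; exact absurd hj (lt_irrefl _)
    · rw [Subsingleton.elim j (0 : Fin 1)] at hj; exact absurd hj (lt_irrefl _)

lemma adj_succ {t : ℕ} {u v : Fin (t+1) → V} : (SG (t+1)).Adj u v ↔
    (T.Adj (u 0) (v 0) ∧ u = Fin.cons (u 0) (fun _ => v 0) ∧ v = Fin.cons (v 0) (fun _ => u 0))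
    ∨ (u 0 = v 0 ∧ (SG t).Adj (Fin.tail u) (Fin.tail v)) := by
  constructor
  · rintro ⟨i, h1, h2, h3⟩
    rcases Fin.eq_zero_or_eq_succ i with rfl | ⟨j, rfl⟩
    · left
      refine ⟨h1, funext fun j => ?_, funext fun j => ?_⟩
      · induction j using Fin.cases with
        | zero => simp
        | succ j' => simpa using (h3 j'.succ (Fin.succ_pos j')).1
      · induction j using Fin.cases with
        | zero => simp
        | succ j' => simpa using (h3 j'.succ (Fin.succ_pos j')).2
    · right
      refine ⟨h2 0 (Fin.succ_pos j), j, h1, fun j' hj' => ?_, fun j' hj' => ?_⟩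
      · exact h2 j'.succ (by rwa [Fin.succ_lt_succ_iff])
      · exact h3 j'.succ (by rwa [Fin.succ_lt_succ_iff])
  · rintro (⟨h1, hu, hv⟩ | ⟨h0, j, h1, h2, h3⟩)
    · refine ⟨0, h1, fun j hj => absurd hj (by simp), fun j hj => ?_⟩
      have hj0 : j ≠ 0 := Fin.pos_iff_ne_zero.mp hj
      obtain ⟨j', rfl⟩ := Fin.exists_succ_eq.mpr hj0
      constructor
      · conv_lhs => rw [hu]
        simp
      · conv_lhs => rw [hv]
        simp
    · refine ⟨j.succ, h1, fun j2 hj2 => ?_, fun j2 hj2 => ?_⟩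
      · induction j2 using Fin.cases with
        | zero => exact h0
        | succ j2' => exact h2 j2' (Fin.succ_lt_succ_iff.mp hj2)
      · have hj0 : j2 ≠ 0 := by
          intro h; subst h; exact absurd hj2 (by simp [Fin.lt_iff_val_lt_val])
        obtain ⟨j2', rfl⟩ := Fin.exists_succ_eq.mpr hj0
        exact h3 j2' (Fin.succ_lt_succ_iff.mp hj2)

lemma adj_bridge {t : ℕ} {x y : V} (h : T.Adj x y) :
    (SG (t+1)).Adj (Fin.cons x (fun _ => y)) (Fin.cons y (fun _ => x)) := by
  rw [adj_succ]
  left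
  refine ⟨by simpa using h, ?_, ?_⟩ <;>
    · congr 1 <;> simp

lemma adj_cons {t : ℕ} {x : V} {a b : Fin t → V} (h : (SG t).Adj a b) :
    (SG (t+1)).Adj (Fin.cons x a) (Fin.cons x b) := by
  rw [adj_succ]
  right
  simp [Fin.tail_cons, h]

lemma adj_tail {t : ℕ} {u v : Fin (t+1) → V} (h : (SG (t+1)).Adj u v) (h0 : u 0 = v 0) :
    (SG t).Adj (Fin.tail u) (Fin.tail v) := by
  rcases adj_succ.mp h with ⟨h1, -, -⟩ | ⟨-, h2⟩
  · exact absurd h0 h1.ne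
  · exact h2

end Sierp

section SierpStruct

variable {V : Type*} {T : SimpleGraph V}

local notation "SG" => SierpinskiGraph T

lemma reach_cons {t : ℕ} (x : V) {a b : Fin t → V} (h : (SG t).Reachable a b) :
    (SG (t+1)).Reachable (Fin.cons x a) (Fin.cons x b) := by
  obtain ⟨w⟩ := h
  obtain ⟨w', -⟩ := walk_map_le (Fin.cons x) (fun a b hab => Or.inl (adj_cons hab)) w
  exact ⟨w'⟩

lemma sg_connected (hconn : T.Connected) : ∀ t, (SG t).Connected := by
  intro t
  induction t with
  | zero =>
    haveI : Nonempty (Fin 0 → V) := ⟨fun i => i.elim0⟩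
    exact SimpleGraph.Connected.mk fun u v =>
      ((funext fun i => i.elim0 : u = v) ▸ SimpleGraph.Reachable.refl u)
  | succ t ih =>
    have key : ∀ (x y : V) (w : T.Walk x y) (u v : Fin (t+1) → V),
        u 0 = x → v 0 = y → (SG (t+1)).Reachable u v := by
      intro x y w
      induction w with
      | nil =>
        intro u v hu hv
        have h1 : (SG (t+1)).Reachable (Fin.cons (u 0) (Fin.tail u)) (Fin.cons (u 0) (Fin.tail v)) :=
          reach_cons _ (ih.preconnected _ _)
        have h2 : u 0 = v 0 := by rw [hu, hv]
        rw [Fin.cons_self_tail, h2, Fin.cons_self_tail] at h1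
        exact h1
      | @cons x z y h w' ihw =>
        intro u v hu hv
        have r1 : (SG (t+1)).Reachable u (Fin.cons x (fun _ => z)) := by
          have h1 : (SG (t+1)).Reachable (Fin.cons (u 0) (Fin.tail u))
              (Fin.cons (u 0) (fun _ => z)) := reach_cons _ (ih.preconnected _ _)
          rw [Fin.cons_self_tail, hu] at h1
          exact h1
        have r2 : (SG (t+1)).Reachable (Fin.cons x (fun _ => z)) (Fin.cons z (fun _ => x)) :=
          (adj_bridge h).reachable
        have r3 : (SG (t+1)).Reachable (Fin.cons z (fun _ => x)) v :=
          ihw (Fin.cons z (fun _ => x)) v (by simp) hv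
        exact (r1.trans r2).trans r3
    haveI : Nonempty V := hconn.nonempty
    haveI : Nonempty (Fin (t+1) → V) := ⟨fun _ => Classical.arbitrary V⟩
    refine SimpleGraph.Connected.mk fun u v => ?_
    obtain ⟨w⟩ := hconn.preconnected (u 0) (v 0)
    exact key _ _ w u v rfl rfl

/-- retraction onto the copy `x` -/
noncomputable def rho (T : SimpleGraph V) (x : V) {t : ℕ} (w : Fin (t+1) → V) : Fin t → V :=
  if w 0 = x then Fin.tail w else (fun _ => stp T x (w 0))

lemma rho_cons (x : V) {t : ℕ} (a : Fin t → V) : rho T x (Fin.cons x a) = a := by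
  simp [rho]

lemma rho_edge (hconn : T.Connected) (hac : T.IsAcyclic) (x : V) {t : ℕ} :
    ∀ u v : Fin (t+1) → V, (SG (t+1)).Adj u v →
      (SG t).Adj (rho T x u) (rho T x v) ∨ rho T x u = rho T x v := by
  intro u v huv
  rcases adj_succ.mp huv with ⟨h1, hu, hv⟩ | ⟨h0, h2⟩
  · by_cases hx : u 0 = x
    · right
      have hvx : v 0 ≠ x := (hx ▸ h1).ne'
      have hs : stp T x (v 0) = v 0 := stp_adj_self hconn hac (hx ▸ h1)
      rw [rho, if_pos hx, rho, if_neg hvx, hs]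
      conv_lhs => rw [hu, hx]
      rw [Fin.tail_cons]
    · by_cases hy : v 0 = x
      · right
        have hs : stp T x (u 0) = u 0 := stp_adj_self hconn hac (hy ▸ h1.symm)
        rw [rho, if_neg hx, rho, if_pos hy, hs]
        conv_rhs => rw [hv, hy]
        rw [Fin.tail_cons]
      · right
        rw [rho, if_neg hx, rho, if_neg hy]
        have hcc := stp_coh' hconn hac (Ne.symm hx) (Ne.symm hy) h1
        rw [hcc]
  · by_cases hx : u 0 = x
    · left
      rw [rho, if_pos hx, rho, if_pos (h0 ▸ hx)]
      exact h2
    · right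
      rw [rho, if_neg hx, rho, if_neg (h0 ▸ hx), ← h0]

lemma dist_copy (hconn : T.Connected) (hac : T.IsAcyclic) {t : ℕ} (x : V) (a b : Fin t → V) :
    (SG (t+1)).dist (Fin.cons x a) (Fin.cons x b) = (SG t).dist a b := by
  refine le_antisymm ?_ ?_
  · have hf : ∀ a b : Fin t → V, (SG t).Adj a b →
        (SG (t+1)).Adj ((Fin.cons x a : Fin (t+1) → V)) ((Fin.cons x b : Fin (t+1) → V)) ∨
          (Fin.cons x a : Fin (t+1) → V) = (Fin.cons x b : Fin (t+1) → V) :=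
      fun a b hab => Or.inl (adj_cons hab)
    exact dist_map_le (H := SG (t+1)) (sg_connected hconn t)
      (fun w => (Fin.cons x w : Fin (t+1) → V)) hf a b
  · have := dist_map_le (H := SG t) (sg_connected hconn (t+1)) (rho T x)
      (rho_edge hconn hac x) (Fin.cons x a) (Fin.cons x b)
    rwa [rho_cons, rho_cons] at this

lemma dist_copy' (hconn : T.Connected) (hac : T.IsAcyclic) {t : ℕ} {u v : Fin (t+1) → V}
    (h : u 0 = v 0) :
    (SG (t+1)).dist u v = (SG t).dist (Fin.tail u) (Fin.tail v) := by
  have hu : u = Fin.cons (v 0) (Fin.tail u) := by rw [← h, Fin.cons_self_tail]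
  have hv : v = Fin.cons (v 0) (Fin.tail v) := by rw [Fin.cons_self_tail]
  conv_lhs => rw [hu, hv]
  exact dist_copy hconn hac _ _ _

end SierpStruct

section SierpAcyc

variable {V : Type*} {T : SimpleGraph V}

local notation "SG" => SierpinskiGraph T

lemma no_cross_walk {W' : Type*} {H : SimpleGraph W'} {σ : W' → Prop}
    (hcr : ∀ a b, H.Adj a b → σ a → ¬ σ b → False) {u v : W'}
    (w : H.Walk u v) (hu : σ u) (hv : ¬ σ v) : False := by
  induction w with
  | nil => exact hv hu
  | @cons a x v' h w' ih =>
    by_cases hx : σ x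
    · exact ih hx hv
    · exact hcr _ _ h hu hx

lemma heads_const {t : ℕ} {u v : Fin (t+1) → V} (w : (SG (t+1)).Walk u v)
    (hd : ∀ d ∈ w.darts, (d.toProd.1) 0 = (d.toProd.2) 0) :
    ∀ y ∈ w.support, y 0 = u 0 := by
  induction w with
  | nil => intro y hy; simp at hy; rw [hy]
  | @cons a x v' h w' ih =>
    intro y hy
    have h0 : a 0 = x 0 := hd ⟨(a, x), h⟩ (by simp [SimpleGraph.Walk.darts_cons])
    rw [SimpleGraph.Walk.support_cons] at hy
    rcases List.mem_cons.mp hy with rfl | hy'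
    · rfl
    · rw [ih (fun d hd' => hd d (by simp [SimpleGraph.Walk.darts_cons, hd'])) y hy', ← h0]

lemma projW {t : ℕ} {u v : Fin (t+1) → V} (w : (SG (t+1)).Walk u v)
    (hd : ∀ d ∈ w.darts, (d.toProd.1) 0 = (d.toProd.2) 0) :
    ∃ w' : (SG t).Walk (Fin.tail u) (Fin.tail v),
      w'.support = w.support.map Fin.tail ∧
      w'.edges = w.edges.map (Sym2.map Fin.tail) ∧ w'.length = w.length := by
  induction w with
  | nil => exact ⟨SimpleGraph.Walk.nil, by simp, by simp, by simp⟩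
  | @cons a x v' h w' ih =>
    have h0 : a 0 = x 0 := hd ⟨(a, x), h⟩ (by simp [SimpleGraph.Walk.darts_cons])
    obtain ⟨w2, hs, he, hl⟩ := ih (fun d hd' => hd d (by simp [SimpleGraph.Walk.darts_cons, hd']))
    refine ⟨SimpleGraph.Walk.cons (adj_tail h h0) w2, ?_, ?_, ?_⟩
    · simp [SimpleGraph.Walk.support_cons, hs]
    · simp [SimpleGraph.Walk.edges_cons, he, Sym2.map_pair_eq]
    · simp [SimpleGraph.Walk.length_cons, hl]

lemma sg_acyclic (hconn : T.Connected) (hac : T.IsAcyclic) : ∀ t, (SG t).IsAcyclic := by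
  intro t
  induction t with
  | zero =>
    intro v c hc
    cases c with
    | nil => exact hc.ne_nil rfl
    | cons h w => exact adj_zero h
  | succ t ih =>
    intro v c hc
    by_cases hcross : ∃ d ∈ c.darts, ¬ ((d.toProd.1) 0 = (d.toProd.2) 0)
    · obtain ⟨d, hdmem, hdne⟩ := hcross
      set a := d.toProd.1
      set b := d.toProd.2
      have hadj : (SG (t+1)).Adj a b := d.adj
      -- the edge (a,b) has the canonical bridge form
      have hform := adj_succ.mp hadj
      rcases hform with ⟨h1, hu, hv⟩ | ⟨h0, -⟩
      swap
      · exact hdne h0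
      -- show it is a bridge
      have hbridge : (SG (t+1)).IsBridge s(a, b) := by
        rw [SimpleGraph.isBridge_iff]
        rintro ⟨wdel⟩
        refine no_cross_walk (σ := fun z => eside T (a 0) (b 0) (z 0)) ?_ wdel
          (eside_p _ _) (not_eside_q hac h1)
        intro p' q' hpq' hp' hq'
        have hadj' : (SG (t+1)).Adj p' q' := (SimpleGraph.sdiff_adj _ _ _ _).mp hpq' |>.1
        have hdel := (SimpleGraph.sdiff_adj _ _ _ _).mp hpq' |>.2
        have hne : ¬ s(p', q') = s(a, b) := by
          intro hh
          exact hdel ((SimpleGraph.fromEdgeSet_adj _).mpr ⟨by simp [hh], hadj'.ne⟩)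
        rcases adj_succ.mp hadj' with ⟨g1, gu, gv⟩ | ⟨g0, -⟩
        · obtain ⟨hpa, hqb⟩ := eside_cross hac h1 _ _ g1 hp' hq'
          have hp'a : p' = a := by rw [gu, hpa, hqb]; exact hu.symm
          have hq'b : q' = b := by rw [gv, hpa, hqb]; exact hv.symm
          exact hne (by rw [hp'a, hq'b])
        · rw [g0] at hp'
          exact hq' hp'
      rw [SimpleGraph.isBridge_iff_adj_and_forall_cycle_notMem hadj] at hbridge
      exact hbridge c hc (by
        rw [SimpleGraph.Walk.edges]
        exact List.mem_map_of_mem hdmem)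
    · push_neg at hcross
      obtain ⟨c', hs, he, hl⟩ := projW c hcross
      have hsup : ∀ y ∈ c.support, y 0 = v 0 := heads_const c hcross
      have hinj : ∀ y ∈ c.support, ∀ z ∈ c.support, Fin.tail y = Fin.tail z → y = z := by
        intro y hy z hz htl
        have h1 : y = Fin.cons (y 0) (Fin.tail y) := (Fin.cons_self_tail y).symm
        have h2 : z = Fin.cons (z 0) (Fin.tail z) := (Fin.cons_self_tail z).symm
        rw [h1, h2, hsup y hy, hsup z hz, htl]
      refine ih c' ?_
      obtain ⟨⟨ht, hne⟩, hnd⟩ := hc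
      refine ⟨⟨?_, ?_⟩, ?_⟩
      · -- trail: edges nodup
        constructor
        rw [he]
        refine (ht.edges_nodup).map_on ?_
        intro e he1 f he2 hef
        induction e using Sym2.ind with
        | _ e1 e2 =>
          induction f using Sym2.ind with
          | _ f1 f2 =>
            simp only [Sym2.map_pair_eq, Sym2.eq_iff] at hef
            have m1 := SimpleGraph.Walk.fst_mem_support_of_mem_edges c he1
            have m2 := SimpleGraph.Walk.snd_mem_support_of_mem_edges c he1
            have m3 := SimpleGraph.Walk.fst_mem_support_of_mem_edges c he2
            have m4 := SimpleGraph.Walk.snd_mem_support_of_mem_edges c he2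
            rcases hef with ⟨hA, hB⟩ | ⟨hA, hB⟩
            · rw [Sym2.eq_iff]
              exact Or.inl ⟨hinj _ m1 _ m3 hA, hinj _ m2 _ m4 hB⟩
            · rw [Sym2.eq_iff]
              exact Or.inr ⟨hinj _ m1 _ m4 hA, hinj _ m2 _ m3 hB⟩
      · -- c' ≠ nil
        intro hnil
        have hl0 : c'.length = 0 := by rw [hnil]; simp
        have hc0 : c.length = 0 := by omega
        cases c with
        | nil => exact hne rfl
        | cons h w => simp [SimpleGraph.Walk.length_cons] at hc0
      · -- support tail nodup
        rw [hs, ← List.map_tail]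
        refine hnd.map_on ?_
        intro y hy z hz htl
        exact hinj y (List.mem_of_mem_tail hy) z (List.mem_of_mem_tail hz) htl

end SierpAcyc

section SplitLemma

variable {V : Type*} {T : SimpleGraph V}

local notation "SG" => SierpinskiGraph T

lemma s_cut (hconn : T.Connected) (hac : T.IsAcyclic) {t : ℕ} {x y : V} (hxy : T.Adj x y)
    {u v : Fin (t+1) → V} (hu : eside T x y (u 0)) (hv : ¬ eside T x y (v 0)) :
    (SG (t+1)).dist u v =
      (SG (t+1)).dist u (Fin.cons x (fun _ => y)) + 1 +
        (SG (t+1)).dist (Fin.cons y (fun _ => x)) v := by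
  refine cut_dist (P := fun z => eside T x y (z 0)) (sg_connected hconn (t+1))
    (adj_bridge hxy) ?_ hu hv
  intro a b hab ha hb
  rcases adj_succ.mp hab with ⟨g1, gu, gv⟩ | ⟨g0, -⟩
  · obtain ⟨hpa, hqb⟩ := eside_cross hac hxy _ _ g1 ha hb
    constructor
    · rw [gu, hpa, hqb]
    · rw [gv, hpa, hqb]
  · rw [g0] at ha; exact absurd ha hb

lemma split (hconn : T.Connected) (hac : T.IsAcyclic) {t : ℕ} {x y : V} (hxy : T.Adj x y)
    {u v : Fin (t+1) → V} (hu : u 0 = x) (hv : T.dist (v 0) y + 1 = T.dist (v 0) x) :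
    (SG (t+1)).dist u v =
      (SG t).dist (Fin.tail u) (fun _ => y) + 1 +
        (SG (t+1)).dist (Fin.cons y (fun _ => x)) v := by
  have h1 := s_cut hconn hac hxy (u := u) (v := v)
    (by rw [hu]; exact eside_p x y) (not_eside_of_dist hconn hac hxy hv)
  rw [h1, dist_copy' hconn hac (by simp [hu]), Fin.tail_cons]

lemma dist_S1 (hconn : T.Connected) (u v : Fin 1 → V) :
    (SG 1).dist u v = T.dist (u 0) (v 0) := by
  refine le_antisymm ?_ ?_
  · have hf : ∀ a b : V, T.Adj a b →
        (SG 1).Adj ((fun _ => a : Fin 1 → V)) ((fun _ => b : Fin 1 → V)) ∨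
          ((fun _ => a : Fin 1 → V)) = ((fun _ => b : Fin 1 → V)) :=
      fun a b hab => Or.inl (adj_one.mpr hab)
    have h := dist_map_le (H := SG 1) hconn (fun z => (fun _ => z : Fin 1 → V)) hf (u 0) (v 0)
    have hu : (fun _ => u 0 : Fin 1 → V) = u := funext fun j => by rw [Subsingleton.elim j 0]
    have hv : (fun _ => v 0 : Fin 1 → V) = v := funext fun j => by rw [Subsingleton.elim j 0]
    rwa [hu, hv] at h
  · have hf : ∀ a b : Fin 1 → V, (SG 1).Adj a b → T.Adj (a 0) (b 0) ∨ a 0 = b 0 :=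
      fun a b hab => Or.inl (adj_one.mp hab)
    exact dist_map_le (H := T) (sg_connected hconn 1) (fun w => w 0) hf u v

end SplitLemma


section TreeFacts

lemma iSup_attain {ι : Type*} [Nonempty ι] [Finite ι] (f : ι → ℕ) :
    ∃ i, (⨆ j, f j) = f i ∧ ∀ j, f j ≤ f i := by
  obtain ⟨i, hi⟩ := Finite.exists_max f
  exact ⟨i, le_antisymm (ciSup_le hi) (le_ciSup (Set.Finite.bddAbove (Set.finite_range f)) i), hi⟩

lemma le_iSup_nat {ι : Type*} [Finite ι] (f : ι → ℕ) (i : ι) : f i ≤ ⨆ j, f j :=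
  le_ciSup (Set.Finite.bddAbove (Set.finite_range f)) i

variable {V : Type*} [Fintype V] {T : SimpleGraph V}

lemma dist_le_ecc (x y : V) : T.dist x y ≤ _root_.eccent T x := le_iSup_nat _ y

lemma ecc_le_diam (x : V) : _root_.eccent T x ≤ graphDiam T := le_iSup_nat _ x

lemma dist_le_diam (x y : V) : T.dist x y ≤ graphDiam T :=
  (dist_le_ecc x y).trans (ecc_le_diam x)

lemma ecc_attain [Nonempty V] (x : V) : ∃ w, _root_.eccent T x = T.dist x w := by
  obtain ⟨w, hw, -⟩ := iSup_attain (fun u => T.dist x u)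
  exact ⟨w, hw⟩

lemma diam_attain [Nonempty V] : ∃ a b, T.dist a b = graphDiam T := by
  obtain ⟨a, ha, -⟩ := iSup_attain (fun v => _root_.eccent T v)
  obtain ⟨b, hb⟩ := ecc_attain (T := T) a
  exact ⟨a, b, by rw [← hb, ← ha]; rfl⟩

lemma diam_ge_two (hconn : T.Connected) (hac : T.IsAcyclic) (hcard : 3 ≤ Fintype.card V) :
    2 ≤ graphDiam T := by
  by_contra h
  push_neg at h
  have hd : ∀ x y : V, T.dist x y ≤ 1 := fun x y => by
    have := dist_le_diam (T := T) x y; omega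
  have hadj : ∀ x y : V, x ≠ y → T.Adj x y := by
    intro x y hxy
    have h1 : 0 < T.dist x y := (hconn.preconnected x y).pos_dist_of_ne hxy
    have h2 := hd x y
    have : T.dist x y = 1 := by omega
    exact SimpleGraph.dist_eq_one_iff_adj.mp this
  obtain ⟨a, b, hab⟩ := Fintype.exists_pair_of_one_lt_card (α := V) (by omega)
  have hcd : (Finset.univ \ {a, b} : Finset V).Nonempty := by
    rw [← Finset.card_pos]
    have h1 : ({a, b} : Finset V).card ≤ 2 := by simpa using Finset.card_insert_le a ({b} : Finset V)
    have h2 := Finset.card_sdiff_add_card_eq_card (Finset.subset_univ ({a, b} : Finset V))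
    have h3 : Finset.univ.card = Fintype.card V := rfl
    omega
  obtain ⟨c, hc⟩ := hcd
  simp only [Finset.mem_sdiff, Finset.mem_univ, Finset.mem_insert, Finset.mem_singleton,
    true_and, not_or] at hc
  obtain ⟨hca, hcb⟩ := hc
  have h1 : T.Adj a c := hadj a c (Ne.symm hca)
  have h2 : T.Adj c b := hadj c b hcb
  have h3 : T.Adj a b := hadj a b hab
  apply not_reach_del hac h3
  have e1 : (T \ SimpleGraph.fromEdgeSet {s(a,b)}).Adj a c := by
    apply del_adj h1
    intro h'
    rw [Sym2.eq_iff] at h'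
    rcases h' with ⟨-, h'⟩ | ⟨h', -⟩
    · exact hcb h'
    · exact hab h'
  have e2 : (T \ SimpleGraph.fromEdgeSet {s(a,b)}).Adj c b := by
    apply del_adj h2
    intro h'
    rw [Sym2.eq_iff] at h'
    rcases h' with ⟨h', -⟩ | ⟨h', -⟩
    · exact hca h'
    · exact hcb h'
  exact e1.reachable.trans e2.reachable

lemma key_half (hconn : T.Connected) (hac : T.IsAcyclic) {q0 q1 vv : V} {k : ℕ}
    (h01 : T.Adj q0 q1) (hd0 : T.dist q0 vv = k) (hd1 : T.dist q1 vv + 1 = k) (w : V) :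
    T.dist q1 w + 1 ≤ graphDiam T ∨ T.dist q1 w + k ≤ graphDiam T + 1 := by
  rcases eside_dichot hconn q0 q1 w with hw | hw'
  · -- w on q0-side
    have hvv : ¬ eside T q0 q1 vv := by
      refine not_eside_of_dist hconn hac h01 ?_
      rw [SimpleGraph.dist_comm (u := vv) (v := q1), SimpleGraph.dist_comm (u := vv) (v := q0)]
      omega
    have hsp := eside_dist hconn hac h01 hw hvv
    have htr : T.dist w q1 ≤ T.dist w q0 + 1 := by
      have h3 := hconn.dist_triangle (u := w) (v := q0) (w := q1)
      have h4 : T.dist q0 q1 ≤ 1 := by simpa using SimpleGraph.dist_le h01.toWalk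
      omega
    have hD := dist_le_diam (T := T) w vv
    have hc1 : T.dist q1 w = T.dist w q1 := SimpleGraph.dist_comm
    right
    omega
  · -- w on q1-side
    have hw : ¬ eside T q0 q1 w := fun hh => (not_reach_del hac h01) (hh.symm.trans hw')
    have := dist_of_not_eside hconn hac h01 hw
    have hD := dist_le_diam (T := T) w q0
    have hc1 : T.dist q1 w = T.dist w q1 := SimpleGraph.dist_comm
    left
    omega

lemma key (hconn : T.Connected) (hac : T.IsAcyclic) {β k2 : ℕ} (hβ : 1 ≤ β)
    {q0 q1 p vv : V}
    (h01 : T.Adj q0 q1) (hpv : T.Adj p vv)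
    (hd : T.dist q0 vv = k2 + 2) (hd1 : T.dist q1 vv + 1 = k2 + 2)
    (hdq1p : T.dist q1 p + 2 = k2 + 2)
    (hD2 : 2 ≤ graphDiam T) :
    β * _root_.eccent T q1 + β * _root_.eccent T p + 2 * β * (k2 + 1) + (k2 + 2) + 4 * β ≤
      4 * β * graphDiam T + graphDiam T := by
  set D := graphDiam T with hDdef
  haveI : Nonempty V := ⟨q0⟩
  obtain ⟨w1, hw1⟩ := ecc_attain (T := T) q1
  obtain ⟨w2, hw2⟩ := ecc_attain (T := T) p
  have hkD : k2 + 2 ≤ D := hd ▸ dist_le_diam q0 vv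
  -- bound for q1 using edge (q0,q1), far vertex vv
  have hb1 := key_half hconn hac h01 hd hd1 w1
  -- bound for p using edge (vv,p), far vertex q0
  have hdpq0 : T.dist p q0 + 1 = k2 + 2 := by
    have t1 := hconn.dist_triangle (u := q0) (v := q1) (w := p)
    have t2 := hconn.dist_triangle (u := q0) (v := p) (w := vv)
    have h4 : T.dist q0 q1 ≤ 1 := by simpa using SimpleGraph.dist_le h01.toWalk
    have h5 : T.dist p vv ≤ 1 := by simpa using SimpleGraph.dist_le hpv.toWalk
    have hc : T.dist q0 p = T.dist p q0 := SimpleGraph.dist_comm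
    omega
  have hx1 : T.dist vv q0 = k2 + 2 := by
    rw [SimpleGraph.dist_comm]; exact hd
  have hx2 : T.dist p q0 + 1 = k2 + 2 := hdpq0
  have hb2 := key_half hconn hac (q0 := vv) (q1 := p) (vv := q0) hpv.symm hx1 hx2 w2
  rw [← hw1] at hb1
  rw [← hw2] at hb2
  set E1 := _root_.eccent T q1
  set E2 := _root_.eccent T p
  have hm3 : β * k2 + β * 2 ≤ β * D := by
    have h := Nat.mul_le_mul_left β (show k2 + 2 ≤ D from hkD)
    rw [Nat.mul_add] at h; exact h
  have hm4 : β * 2 ≤ β * D := by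
    exact Nat.mul_le_mul_left β hD2
  rcases hb1 with hb1 | hb1 <;> rcases hb2 with hb2 | hb2
  · have m1 : β * E1 + β * 1 ≤ β * D := by
      have h := Nat.mul_le_mul_left β hb1; rw [Nat.mul_add] at h; exact h
    have m2 : β * E2 + β * 1 ≤ β * D := by
      have h := Nat.mul_le_mul_left β hb2; rw [Nat.mul_add] at h; exact h
    linarith
  · have m1 : β * E1 + β * 1 ≤ β * D := by
      have h := Nat.mul_le_mul_left β hb1; rw [Nat.mul_add] at h; exact h
    have m2 : β * E2 + (β * k2 + β * 1) ≤ β * D := by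
      have h := Nat.mul_le_mul_left β (show E2 + (k2 + 1) ≤ D by omega)
      rw [Nat.mul_add, Nat.mul_add] at h; exact h
    linarith
  · have m1 : β * E1 + (β * k2 + β * 1) ≤ β * D := by
      have h := Nat.mul_le_mul_left β (show E1 + (k2 + 1) ≤ D by omega)
      rw [Nat.mul_add, Nat.mul_add] at h; exact h
    have m2 : β * E2 + β * 1 ≤ β * D := by
      have h := Nat.mul_le_mul_left β hb2; rw [Nat.mul_add] at h; exact h
    linarith
  · have m1 : β * E1 + (β * k2 + β * 1) ≤ β * D := by
      have h := Nat.mul_le_mul_left β (show E1 + (k2 + 1) ≤ D by omega)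
      rw [Nat.mul_add, Nat.mul_add] at h; exact h
    have m2 : β * E2 + (β * k2 + β * 1) ≤ β * D := by
      have h := Nat.mul_le_mul_left β (show E2 + (k2 + 1) ≤ D by omega)
      rw [Nat.mul_add, Nat.mul_add] at h; exact h
    linarith

end TreeFacts

def bb (t : ℕ) : ℕ := 2^t - 1
def ccc (t : ℕ) : ℕ := 2^t - t - 1

lemma two_pow_ge (t : ℕ) : t + 1 ≤ 2^t := Nat.lt_two_pow_self

lemma bb_zero : bb 0 = 0 := rfl
lemma ccc_zero : ccc 0 = 0 := rfl
lemma bb_one : bb 1 = 1 := rfl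
lemma ccc_one : ccc 1 = 0 := rfl

lemma bb_succ (t : ℕ) : bb (t+1) = 2 * bb t + 1 := by
  have h := Nat.one_le_two_pow (n := t)
  simp only [bb, pow_succ]
  omega

lemma ccc_succ (t : ℕ) : ccc (t+1) = ccc t + bb t := by
  have h := two_pow_ge t
  simp only [ccc, bb, pow_succ]
  omega

lemma bb_mono (t : ℕ) : bb t ≤ bb (t+1) := by rw [bb_succ]; omega

lemma ccc_mono (t : ℕ) : ccc t ≤ ccc (t+1) := by rw [ccc_succ]; omega

section Exact

variable {V : Type*} {T : SimpleGraph V}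

local notation "SG" => SierpinskiGraph T

lemma ent_corner (hconn : T.Connected) (hac : T.IsAcyclic) {t : ℕ}
    (hC : ∀ x y : V, (SG t).dist (fun _ => x) (fun _ => y) = bb t * T.dist x y) :
    ∀ (k : ℕ) (z a y : V), T.Adj a z → T.dist z y = k → T.dist a y = k + 1 →
      (SG (t+1)).dist (Fin.cons z (fun _ => a)) (fun _ => y) = bb t * (2*k+1) + k := by
  intro k
  induction k with
  | zero =>
    intro z a y haz hzy hay
    have hz : z = y := (hconn.dist_eq_zero_iff).mp hzy
    subst hz
    have h0 : (Fin.cons z (fun _ => a) : Fin (t+1) → V) 0 = (fun _ => z : Fin (t+1) → V) 0 := by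
      simp
    rw [dist_copy' hconn hac h0]
    have ht1 : Fin.tail (Fin.cons z (fun _ => a) : Fin (t+1) → V) = (fun _ => a) := by
      funext i; simp [Fin.tail]
    have ht2 : Fin.tail (fun _ => z : Fin (t+1) → V) = (fun _ => z) := rfl
    rw [ht1, ht2, hC a z]
    have : T.dist a z = 1 := SimpleGraph.dist_eq_one_iff_adj.mpr haz
    rw [this]
    ring
  | succ k ih =>
    intro z a y haz hzy hay
    have hzy' : z ≠ y := by
      intro h; subst h; rw [SimpleGraph.dist_self] at hzy; omega
    obtain ⟨hadj1, hspec1⟩ := stp_spec hconn hzy'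
    set z1 := stp T z y with hz1def
    have hd_z1y : T.dist z1 y = k := by omega
    have hsplit := split hconn hac hadj1 (u := (Fin.cons z (fun _ => a) : Fin (t+1) → V))
      (v := (fun _ => y : Fin (t+1) → V)) (by simp) (by
        show T.dist y z1 + 1 = T.dist y z
        rw [SimpleGraph.dist_comm (u := y) (v := z1), SimpleGraph.dist_comm (u := y) (v := z)]
        omega)
    rw [hsplit]
    have ht1 : Fin.tail (Fin.cons z (fun _ => a) : Fin (t+1) → V) = (fun _ => a) := by
      funext i; simp [Fin.tail]
    rw [ht1, hC a z1]
    have haz1 : T.dist a z1 = 2 := by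
      have hne : a ≠ z1 := by
        intro h
        rw [← h] at hd_z1y
        omega
      have hnadj : ¬ T.Adj a z1 := by
        intro h
        have htr := hconn.dist_triangle (u := a) (v := z1) (w := y)
        have : T.dist a z1 ≤ 1 := by simpa using SimpleGraph.dist_le h.toWalk
        omega
      have hle : T.dist a z1 ≤ 2 := by
        have t1 := hconn.dist_triangle (u := a) (v := z) (w := z1)
        have t2 : T.dist a z ≤ 1 := by simpa using SimpleGraph.dist_le haz.toWalk
        have t3 : T.dist z z1 ≤ 1 := by simpa using SimpleGraph.dist_le hadj1.toWalk
        omega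
      have hpos : 0 < T.dist a z1 := (hconn.preconnected a z1).pos_dist_of_ne hne
      have hno : T.dist a z1 ≠ 1 := fun h => hnadj (SimpleGraph.dist_eq_one_iff_adj.mp h)
      omega
    rw [haz1]
    have hrec := ih z1 z y hadj1 hd_z1y (by omega)
    rw [hrec]
    ring

lemma corner (hconn : T.Connected) (hac : T.IsAcyclic) :
    ∀ (t : ℕ) (x y : V), (SG t).dist (fun _ => x) (fun _ => y) = bb t * T.dist x y := by
  intro t
  induction t with
  | zero =>
    intro x y
    have : (fun _ => x : Fin 0 → V) = (fun _ => y) := funext fun i => i.elim0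
    rw [this, SimpleGraph.dist_self, bb_zero]
    ring
  | succ t ih =>
    intro x y
    by_cases hxy : x = y
    · subst hxy
      rw [SimpleGraph.dist_self, SimpleGraph.dist_self]
      ring
    · have hpos : 0 < T.dist x y := (hconn.preconnected x y).pos_dist_of_ne hxy
      obtain ⟨k, hk⟩ : ∃ k, T.dist x y = k + 1 := ⟨T.dist x y - 1, by omega⟩
      obtain ⟨hadj1, hspec1⟩ := stp_spec hconn hxy
      set x1 := stp T x y with hx1def
      have hsplit := split hconn hac hadj1 (u := (fun _ => x : Fin (t+1) → V))
        (v := (fun _ => y : Fin (t+1) → V)) rfl (by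
          show T.dist y x1 + 1 = T.dist y x
          rw [SimpleGraph.dist_comm (u := y) (v := x1), SimpleGraph.dist_comm (u := y) (v := x)]
          omega)
      rw [hsplit]
      have ht2 : Fin.tail (fun _ => x : Fin (t+1) → V) = (fun _ => x) := rfl
      rw [ht2, ih x x1]
      have h1 : T.dist x x1 = 1 := SimpleGraph.dist_eq_one_iff_adj.mpr hadj1
      rw [h1]
      have hrec := ent_corner hconn hac ih k x1 x y hadj1 (by omega) (by omega)
      rw [hrec, hk, bb_succ]
      ring

end Exact

section Bounds

variable {V : Type*} [Fintype V] {T : SimpleGraph V}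

local notation "SG" => SierpinskiGraph T

lemma pen_ecc (hconn : T.Connected) (hac : T.IsAcyclic) {y w0 p : V}
    (hecc : T.dist y w0 = _root_.eccent T y) (hyp : T.dist y p + 1 = T.dist y w0)
    (hpw : T.Adj p w0) : _root_.eccent T p ≤ 1 ∨ _root_.eccent T p + 1 ≤ graphDiam T := by
  haveI : Nonempty V := ⟨y⟩
  obtain ⟨ω, hω⟩ := ecc_attain (T := T) p
  have hy : eside T p w0 y := eside_of_dist hconn hac hpw hyp
  by_cases hωs : eside T p w0 ω
  · right
    have h1 := dist_of_eside hconn hac hpw hωs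
    have h2 : T.dist ω w0 ≤ graphDiam T := dist_le_diam _ _
    have h3 : T.dist ω p = T.dist p ω := SimpleGraph.dist_comm
    omega
  · left
    have hsp := eside_dist hconn hac hpw hy hωs
    have h1 : T.dist y ω ≤ _root_.eccent T y := dist_le_ecc _ _
    have h2 : T.dist p ω ≤ T.dist p w0 + T.dist w0 ω := hconn.dist_triangle
    have h3 : T.dist p w0 ≤ 1 := by simpa using SimpleGraph.dist_le hpw.toWalk
    omega

lemma dist_eq_two' (hconn : T.Connected) {a z z1 y : V} {k : ℕ}
    (haz : T.Adj a z) (hzz1 : T.Adj z z1) (h1 : T.dist a y = k + 2) (h2 : T.dist z1 y = k) :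
    T.dist a z1 = 2 := by
  have hne : a ≠ z1 := by intro h; rw [← h] at h2; omega
  have hnadj : ¬ T.Adj a z1 := by
    intro h
    have htr := hconn.dist_triangle (u := a) (v := z1) (w := y)
    have : T.dist a z1 ≤ 1 := by simpa using SimpleGraph.dist_le h.toWalk
    omega
  have hle : T.dist a z1 ≤ 2 := by
    have t1 := hconn.dist_triangle (u := a) (v := z) (w := z1)
    have t2 : T.dist a z ≤ 1 := by simpa using SimpleGraph.dist_le haz.toWalk
    have t3 : T.dist z z1 ≤ 1 := by simpa using SimpleGraph.dist_le hzz1.toWalk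
    omega
  have hpos : 0 < T.dist a z1 := (hconn.preconnected a z1).pos_dist_of_ne hne
  have hno : T.dist a z1 ≠ 1 := fun h => hnadj (SimpleGraph.dist_eq_one_iff_adj.mp h)
  omega

lemma Blem (hconn : T.Connected) (hac : T.IsAcyclic) {dd t : ℕ}
    (hA : ∀ (y : V) (w : Fin (t+1) → V),
      (SG (t+1)).dist (fun _ => y) w ≤ bb (t+1) * _root_.eccent T y + dd * ccc (t+1)) :
    ∀ (k : ℕ) (z a : V) (v : Fin (t+1+1) → V), T.Adj a z →
      T.dist z (v 0) = k → T.dist a (v 0) = k + 1 →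
    (k = 0 → (SG (t+1+1)).dist (Fin.cons z (fun _ => a)) v ≤
        bb (t+1) * _root_.eccent T a + dd * ccc (t+1)) ∧
    (1 ≤ k → (SG (t+1+1)).dist (Fin.cons z (fun _ => a)) v ≤
        (2 * bb (t+1) + 1) * k + bb (t+1) * _root_.eccent T (stp T (v 0) z) + dd * ccc (t+1)) := by
  intro k
  induction k with
  | zero =>
    intro z a v haz h0 h1
    refine ⟨fun _ => ?_, fun h => absurd h (by omega)⟩
    have hz : z = v 0 := hconn.dist_eq_zero_iff.mp h0
    have hh : (Fin.cons z (fun _ => a) : Fin (t+1+1) → V) 0 = v 0 := by simp [hz]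
    rw [dist_copy' hconn hac hh]
    have ht1 : Fin.tail (Fin.cons z (fun _ => a) : Fin (t+1+1) → V) = (fun _ => a) := by
      funext i; simp [Fin.tail]
    rw [ht1]
    exact hA a (Fin.tail v)
  | succ k ih =>
    intro z a v haz h0 h1
    refine ⟨fun h => absurd h (Nat.succ_ne_zero k), fun _ => ?_⟩
    have hzv : z ≠ v 0 := by
      intro h; rw [h] at h0; rw [SimpleGraph.dist_self] at h0; omega
    obtain ⟨hadj1, hspec1⟩ := stp_spec hconn hzv
    set z1 := stp T z (v 0) with hz1def
    have hsplit := split hconn hac hadj1 (u := (Fin.cons z (fun _ => a) : Fin (t+1+1) → V))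
      (v := v) (by simp) (by
        show T.dist (v 0) z1 + 1 = T.dist (v 0) z
        rw [SimpleGraph.dist_comm (u := v 0) (v := z1), SimpleGraph.dist_comm (u := v 0) (v := z)]
        omega)
    rw [hsplit]
    have ht1 : Fin.tail (Fin.cons z (fun _ => a) : Fin (t+1+1) → V) = (fun _ => a) := by
      funext i; simp [Fin.tail]
    rw [ht1, corner hconn hac (t+1) a z1,
      dist_eq_two' hconn haz hadj1 h1 (by omega)]
    rcases Nat.eq_zero_or_pos k with hk0 | hkpos
    · have hb := (ih z1 z v hadj1 (by omega) (by omega)).1 hk0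
      have hadjzv : T.Adj z (v 0) := by
        refine SimpleGraph.dist_eq_one_iff_adj.mp ?_
        omega
      have hstp : stp T (v 0) z = z := stp_adj_self hconn hac hadjzv.symm
      rw [hstp]
      have hk : k = 0 := hk0
      subst hk
      linarith
    · have hb := (ih z1 z v hadj1 (by omega) (by omega)).2 hkpos
      have hz1v : v 0 ≠ z1 := by
        intro h; rw [← h] at hspec1
        rw [SimpleGraph.dist_self] at hspec1
        omega
      have hcoh : stp T (v 0) z = stp T (v 0) z1 := by
        refine stp_coh hconn hac hz1v hadj1.symm ?_
        rw [SimpleGraph.dist_comm (u := v 0) (v := z), SimpleGraph.dist_comm (u := v 0) (v := z1)]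
        omega
      rw [hcoh]
      linarith

lemma ent_a_dist (hconn : T.Connected) {y w0 z1 p : V} {k : ℕ}
    (hyw : T.dist y w0 = k + 1) (hyz1 : T.Adj y z1) (hz1w : T.dist z1 w0 = k)
    (hwp : T.Adj w0 p) (hpz1 : T.dist p z1 + 1 = k) : T.dist y p = k := by
  have t1 := hconn.dist_triangle (u := y) (v := z1) (w := p)
  have t2 := hconn.dist_triangle (u := y) (v := p) (w := w0)
  have t3 : T.dist y z1 ≤ 1 := by simpa using SimpleGraph.dist_le hyz1.toWalk
  have t4 : T.dist w0 p ≤ 1 := by simpa using SimpleGraph.dist_le hwp.toWalk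
  have c1 : T.dist z1 p = T.dist p z1 := SimpleGraph.dist_comm
  have c2 : T.dist p w0 = T.dist w0 p := SimpleGraph.dist_comm
  omega

lemma Alem (hconn : T.Connected) (hac : T.IsAcyclic) (dd : ℕ)
    (hDD : graphDiam T = dd + 2) :
    ∀ (t : ℕ) (y : V) (w : Fin (t+1) → V),
      (SG (t+1)).dist (fun _ => y) w ≤ bb (t+1) * _root_.eccent T y + dd * ccc (t+1) := by
  intro t
  induction t with
  | zero =>
    intro y w
    rw [dist_S1 hconn]
    have h := dist_le_ecc (T := T) y (w 0)
    rw [show bb (0+1) = 1 from rfl, show ccc (0+1) = 0 from rfl]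
    omega
  | succ t ih =>
    intro y w
    have hbbs : bb (t+1+1) = 2 * bb (t+1) + 1 := bb_succ (t+1)
    have hcccs : ccc (t+1+1) = ccc (t+1) + bb (t+1) := ccc_succ (t+1)
    by_cases h0 : y = w 0
    · have hh : (fun _ => y : Fin (t+1+1) → V) 0 = w 0 := h0
      rw [dist_copy' hconn hac hh]
      have hb := ih y (Fin.tail w)
      have m1 : bb (t+1) * _root_.eccent T y ≤ bb (t+1+1) * _root_.eccent T y :=
        Nat.mul_le_mul_right _ (bb_mono (t+1))
      have m2 : dd * ccc (t+1) ≤ dd * ccc (t+1+1) :=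
        Nat.mul_le_mul_left _ (ccc_mono (t+1))
      have ht : Fin.tail (fun _ => y : Fin (t+1+1) → V) = (fun _ => y) := rfl
      rw [ht]
      have := hb
      omega
    · have hpos : 0 < T.dist y (w 0) := (hconn.preconnected y (w 0)).pos_dist_of_ne h0
      obtain ⟨k, hk⟩ : ∃ k, T.dist y (w 0) = k + 1 := ⟨T.dist y (w 0) - 1, by omega⟩
      obtain ⟨hadj1, hspec1⟩ := stp_spec hconn h0
      set z1 := stp T y (w 0) with hz1def
      have hsplit := split hconn hac hadj1 (u := (fun _ => y : Fin (t+1+1) → V))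
        (v := w) rfl (by
          show T.dist (w 0) z1 + 1 = T.dist (w 0) y
          rw [SimpleGraph.dist_comm (u := w 0) (v := z1),
            SimpleGraph.dist_comm (u := w 0) (v := y)]
          omega)
      rw [hsplit]
      have ht : Fin.tail (fun _ => y : Fin (t+1+1) → V) = (fun _ => y) := rfl
      rw [ht, corner hconn hac (t+1) y z1,
        SimpleGraph.dist_eq_one_iff_adj.mpr hadj1]
      have hEy : k + 1 ≤ _root_.eccent T y := hk ▸ dist_le_ecc y (w 0)
      rcases Nat.eq_zero_or_pos k with hk0 | hkpos
      · subst hk0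
        have hb := (Blem hconn hac ih 0 z1 y w hadj1 (by omega) (by omega)).1 rfl
        have m1 : bb (t+1) * 1 ≤ bb (t+1) * _root_.eccent T y := Nat.mul_le_mul_left _ (by omega)
        rw [hbbs, hcccs]
        nlinarith [hb, m1, hEy]
      · have hb := (Blem hconn hac ih k z1 y w hadj1 (by omega) (by omega)).2 hkpos
        have hwz1 : w 0 ≠ z1 := by
          intro h; rw [← h] at hspec1; rw [SimpleGraph.dist_self] at hspec1; omega
        obtain ⟨hadjp, hspecp⟩ := stp_spec hconn hwz1
        set p := stp T (w 0) z1 with hpdef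
        have hEp_le : _root_.eccent T p ≤ dd + 2 := hDD ▸ ecc_le_diam p
        rw [hbbs, hcccs]
        rcases Nat.lt_or_ge (k + 1) (_root_.eccent T y) with hcase | hcase
        · -- k + 2 ≤ ecc y : use Ep ≤ dd + 2
          have m1 : (2 * bb (t+1) + 1) * k + (2 * bb (t+1) + 1) * 2 ≤
              (2 * bb (t+1) + 1) * _root_.eccent T y := by
            have h := Nat.mul_le_mul_left (2 * bb (t+1) + 1) (show k + 2 ≤ _root_.eccent T y by omega)
            rw [Nat.mul_add] at h; exact h
          have m2 : bb (t+1) * _root_.eccent T p ≤ bb (t+1) * dd + bb (t+1) * 2 := by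
            have h := Nat.mul_le_mul_left (bb (t+1)) hEp_le
            rw [Nat.mul_add] at h; exact h
          nlinarith [hb, m1, m2]
        · -- k + 1 = ecc y : use pen_ecc
          have hKE : k + 1 = _root_.eccent T y := by omega
          have hdyp : T.dist y p = k := by
            refine ent_a_dist hconn hk hadj1 (by omega) hadjp ?_
            have hcm : T.dist (w 0) z1 = T.dist z1 (w 0) := SimpleGraph.dist_comm
            omega
          have hpw0 : T.Adj p (w 0) := hadjp.symm
          have hpen := pen_ecc hconn hac (by rw [hk]; exact hKE) (by omega) hpw0
          have hEp1 : _root_.eccent T p ≤ dd + 1 := by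
            rcases hpen with h | h
            · omega
            · omega
          have m2 : bb (t+1) * _root_.eccent T p ≤ bb (t+1) * dd + bb (t+1) * 1 := by
            have h := Nat.mul_le_mul_left (bb (t+1)) hEp1
            rw [Nat.mul_add] at h; exact h
          have m5a := Nat.mul_le_mul_left (2 * bb (t+1) + 1) (le_of_eq hKE)
          linarith [hb, m2, m5a]

def NNf (dd t : ℕ) : ℕ := 2 * (bb t * (dd+1) + dd * ccc t) + (dd+1) * bb (t+1) + 1

lemma NNf_mono (dd t : ℕ) : NNf dd t ≤ NNf dd (t+1) := by
  have m1 : bb t * (dd+1) ≤ bb (t+1) * (dd+1) := Nat.mul_le_mul_right _ (bb_mono t)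
  have m2 : dd * ccc t ≤ dd * ccc (t+1) := Nat.mul_le_mul_left _ (ccc_mono t)
  have m3 : (dd+1) * bb (t+1) ≤ (dd+1) * bb (t+1+1) := Nat.mul_le_mul_left _ (bb_mono (t+1))
  simp only [NNf]
  omega

lemma diamS (hconn : T.Connected) (hac : T.IsAcyclic) (dd : ℕ)
    (hDD : graphDiam T = dd + 2) :
    ∀ (t : ℕ) (u v : Fin (t+1) → V), (SG (t+1)).dist u v ≤ NNf dd t := by
  intro t
  induction t with
  | zero =>
    intro u v
    rw [dist_S1 hconn]
    have h := dist_le_diam (T := T) (u 0) (v 0)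
    simp only [NNf, bb_zero, ccc_zero]
    rw [show bb (0+1) = 1 from rfl]
    omega
  | succ t ih =>
    intro u v
    have hbbs : bb (t+1+1) = 2 * bb (t+1) + 1 := bb_succ (t+1)
    by_cases h0 : u 0 = v 0
    · rw [dist_copy' hconn hac h0]
      exact (ih _ _).trans (NNf_mono dd t)
    · have hpos : 0 < T.dist (u 0) (v 0) := (hconn.preconnected _ _).pos_dist_of_ne h0
      have hEu : _root_.eccent T (u 0) ≤ dd + 2 := hDD ▸ ecc_le_diam _
      have hEv : _root_.eccent T (v 0) ≤ dd + 2 := hDD ▸ ecc_le_diam _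
      rcases Nat.lt_or_ge (T.dist (u 0) (v 0)) 2 with hk1 | hk2
      · -- dist = 1
        have hadj : T.Adj (u 0) (v 0) := SimpleGraph.dist_eq_one_iff_adj.mp (by omega)
        have hsplit := split hconn hac hadj (u := u) (v := v) rfl (by
          rw [SimpleGraph.dist_self]
          rw [SimpleGraph.dist_comm]
          omega)
        rw [hsplit]
        have h2 : (Fin.cons (v 0) (fun _ => u 0) : Fin (t+1+1) → V) 0 = v 0 := by simp
        rw [dist_copy' hconn hac h2]
        have ht : Fin.tail (Fin.cons (v 0) (fun _ => u 0) : Fin (t+1+1) → V) = (fun _ => u 0) := by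
          funext i; simp [Fin.tail]
        rw [ht]
        have b1 : (SG (t+1)).dist (Fin.tail u) (fun _ => v 0) ≤
            bb (t+1) * _root_.eccent T (v 0) + dd * ccc (t+1) := by
          rw [SimpleGraph.dist_comm]
          exact Alem hconn hac dd hDD t (v 0) (Fin.tail u)
        have b2 := Alem hconn hac dd hDD t (u 0) (Fin.tail v)
        have m1 : bb (t+1) * _root_.eccent T (u 0) ≤ bb (t+1) * dd + bb (t+1) * 2 := by
          have h := Nat.mul_le_mul_left (bb (t+1)) hEu; rw [Nat.mul_add] at h; exact h
        have m2 : bb (t+1) * _root_.eccent T (v 0) ≤ bb (t+1) * dd + bb (t+1) * 2 := by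
          have h := Nat.mul_le_mul_left (bb (t+1)) hEv; rw [Nat.mul_add] at h; exact h
        simp only [NNf]
        rw [hbbs]
        nlinarith [b1, b2]
      · -- dist ≥ 2
        obtain ⟨k2, hk⟩ : ∃ k2, T.dist (u 0) (v 0) = k2 + 2 := ⟨T.dist (u 0) (v 0) - 2, by omega⟩
        obtain ⟨hadj1, hspec1⟩ := stp_spec hconn h0
        set q1 := stp T (u 0) (v 0) with hq1def
        have hsplit := split hconn hac hadj1 (u := u) (v := v) rfl (by
          rw [SimpleGraph.dist_comm (u := v 0) (v := q1),
            SimpleGraph.dist_comm (u := v 0) (v := u 0)]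
          omega)
        rw [hsplit]
        have b1 : (SG (t+1)).dist (Fin.tail u) (fun _ => q1) ≤
            bb (t+1) * _root_.eccent T q1 + dd * ccc (t+1) := by
          rw [SimpleGraph.dist_comm]
          exact Alem hconn hac dd hDD t q1 (Fin.tail u)
        have hb := (Blem hconn hac (Alem hconn hac dd hDD t) (k2+1) q1 (u 0) v hadj1
          (by omega) (by omega)).2 (by omega)
        have hvq1 : v 0 ≠ q1 := by
          intro h; rw [← h] at hspec1; rw [SimpleGraph.dist_self] at hspec1; omega
        obtain ⟨hadjp, hspecp⟩ := stp_spec hconn hvq1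
        set p := stp T (v 0) q1 with hpdef
        have hkey := key hconn hac (β := bb (t+1)) (k2 := k2) (by
            rw [bb_succ]; omega)
          (q0 := u 0) (q1 := q1) (p := p) (vv := v 0) hadj1 hadjp.symm hk (by omega)
          (by
            have c1 : T.dist q1 p = T.dist p q1 := SimpleGraph.dist_comm
            have c2 : T.dist (v 0) q1 = T.dist q1 (v 0) := SimpleGraph.dist_comm
            omega)
          (by omega)
        rw [hDD] at hkey
        simp only [NNf]
        rw [hbbs]
        nlinarith [b1, hb, hkey]

end Bounds

section Pair

variable {V : Type*} {T : SimpleGraph V}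

local notation "SG" => SierpinskiGraph T

noncomputable def pth (T : SimpleGraph V) (a b : V) : ℕ → V
  | 0 => a
  | (i+1) => stp T (pth T a b i) b

lemma pth_b (hconn : T.Connected) (a b : V) :
    ∀ i, i ≤ T.dist a b → T.dist (pth T a b i) b + i = T.dist a b := by
  intro i
  induction i with
  | zero => intro _; simp [pth]
  | succ i ih =>
    intro hi
    have h1 := ih (by omega)
    have hne : pth T a b i ≠ b := by
      intro h; rw [h, SimpleGraph.dist_self] at h1; omega
    obtain ⟨ha, hs⟩ := stp_spec hconn hne
    show T.dist (stp T (pth T a b i) b) b + (i+1) = T.dist a b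
    omega

lemma pth_ne (hconn : T.Connected) {a b : V} {i : ℕ} (hi : i < T.dist a b) :
    pth T a b i ≠ b := by
  have h1 := pth_b hconn a b i (by omega)
  intro h; rw [h, SimpleGraph.dist_self] at h1; omega

lemma pth_adj (hconn : T.Connected) {a b : V} {i : ℕ} (hi : i < T.dist a b) :
    T.Adj (pth T a b i) (pth T a b (i+1)) :=
  (stp_spec hconn (pth_ne hconn hi)).1

lemma pth_last (hconn : T.Connected) (a b : V) : pth T a b (T.dist a b) = b := by
  have h1 := pth_b hconn a b (T.dist a b) le_rfl
  have : T.dist (pth T a b (T.dist a b)) b = 0 := by omega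
  exact (hconn.preconnected _ _).dist_eq_zero_iff.mp this

lemma pth_chain (hconn : T.Connected) (a b : V) (i : ℕ) :
    ∀ m, i + m ≤ T.dist a b → T.dist (pth T a b i) (pth T a b (i+m)) ≤ m := by
  intro m
  induction m with
  | zero => intro _; simp [SimpleGraph.dist_self]
  | succ m ih =>
    intro hm
    have h1 := ih (by omega)
    have h2 : T.Adj (pth T a b (i+m)) (pth T a b (i+m+1)) := pth_adj hconn (by omega)
    have h3 := hconn.dist_triangle (u := pth T a b i) (v := pth T a b (i+m)) (w := pth T a b (i+m+1))
    have h4 : T.dist (pth T a b (i+m)) (pth T a b (i+m+1)) ≤ 1 := by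
      simpa using SimpleGraph.dist_le h2.toWalk
    have : i + (m+1) = (i + m) + 1 := by omega
    rw [show i + (m+1) = (i+m)+1 from by omega]
    omega

lemma pth_dist (hconn : T.Connected) (a b : V) {i j : ℕ} (hij : i ≤ j) (hj : j ≤ T.dist a b) :
    T.dist (pth T a b i) (pth T a b j) + i = j := by
  have hle : T.dist (pth T a b i) (pth T a b j) ≤ j - i := by
    have := pth_chain hconn a b i (j - i) (by omega)
    rwa [show i + (j-i) = j from by omega] at this
  have hi := pth_b hconn a b i (by omega)
  have hjb := pth_b hconn a b j hj
  have htr := hconn.dist_triangle (u := pth T a b i) (v := pth T a b j) (w := b)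
  omega

def WW (a b : V) : (s : ℕ) → Bool → (Fin s → V)
  | 0, _ => fun i => i.elim0
  | (s+1), fl => Fin.cons (if fl then b else a) (WW a b s (!fl))

def phiF (dd s : ℕ) : ℕ := bb s * (dd+1) + dd * ccc s

lemma PHI (hconn : T.Connected) (hac : T.IsAcyclic) {a b : V} {dd : ℕ}
    (hd : T.dist a b = dd + 2) :
    ∀ s, (SG s).dist (WW a b s true) (fun _ => pth T a b 1) = phiF dd s ∧
      (SG s).dist (WW a b s false) (fun _ => pth T a b (dd+1)) = phiF dd s := by
  intro s
  induction s with
  | zero =>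
    have h1 : (WW a b 0 true : Fin 0 → V) = (fun _ => pth T a b 1) := funext fun i => i.elim0
    have h2 : (WW a b 0 false : Fin 0 → V) = (fun _ => pth T a b (dd+1)) := funext fun i => i.elim0
    constructor
    · rw [h1, SimpleGraph.dist_self]
      simp [phiF, bb_zero, ccc_zero]
    · rw [h2, SimpleGraph.dist_self]
      simp [phiF, bb_zero, ccc_zero]
  | succ s ih =>
    have hlast : pth T a b (dd+2) = b := by
      rw [← hd]; exact pth_last hconn a b
    constructor
    · -- from copy b towards corner pth 1
      have hadj : T.Adj b (pth T a b (dd+1)) := by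
        have := pth_adj hconn (a := a) (b := b) (i := dd+1) (by omega)
        rw [show dd+1+1 = dd+2 from rfl, hlast] at this
        exact this.symm
      have hv : T.dist (pth T a b 1) (pth T a b (dd+1)) + 1 = T.dist (pth T a b 1) b := by
        have h1 := pth_dist hconn a b (i := 1) (j := dd+1) (by omega) (by omega)
        have h2 := pth_dist hconn a b (i := 1) (j := dd+2) (by omega) (by omega)
        rw [hlast] at h2
        omega
      have hsplit := split hconn hac hadj
        (u := (Fin.cons b (WW a b s false) : Fin (s+1) → V))
        (v := (fun _ => pth T a b 1 : Fin (s+1) → V)) (by simp) hv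
      rw [show WW a b (s+1) true = Fin.cons b (WW a b s false) from by simp [WW], hsplit]
      have ht : Fin.tail (Fin.cons b (WW a b s false) : Fin (s+1) → V) = WW a b s false := by
        funext i; simp [Fin.tail]
      rw [ht, ih.2]
      have hent := ent_corner hconn hac (corner hconn hac s) dd
        (pth T a b (dd+1)) b (pth T a b 1) hadj
        (by
          have h1 := pth_dist hconn a b (i := 1) (j := dd+1) (by omega) (by omega)
          have hc : T.dist (pth T a b (dd+1)) (pth T a b 1) =
            T.dist (pth T a b 1) (pth T a b (dd+1)) := SimpleGraph.dist_comm
          omega)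
        (by
          have h2 := pth_dist hconn a b (i := 1) (j := dd+2) (by omega) (by omega)
          rw [hlast] at h2
          have hc : T.dist b (pth T a b 1) = T.dist (pth T a b 1) b := SimpleGraph.dist_comm
          omega)
      rw [hent]
      simp only [phiF, bb_succ, ccc_succ]
      ring
    · -- from copy a towards corner pth (dd+1)
      have hadj : T.Adj a (pth T a b 1) := by
        have := pth_adj hconn (a := a) (b := b) (i := 0) (by omega)
        exact this
      have hv : T.dist (pth T a b (dd+1)) (pth T a b 1) + 1 = T.dist (pth T a b (dd+1)) a := by
        have h1 := pth_dist hconn a b (i := 1) (j := dd+1) (by omega) (by omega)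
        have h2 := pth_dist hconn a b (i := 0) (j := dd+1) (by omega) (by omega)
        have hc1 : T.dist (pth T a b (dd+1)) (pth T a b 1) =
          T.dist (pth T a b 1) (pth T a b (dd+1)) := SimpleGraph.dist_comm
        have hc2 : T.dist (pth T a b (dd+1)) a =
          T.dist (pth T a b 0) (pth T a b (dd+1)) := SimpleGraph.dist_comm
        rw [hc1, hc2]
        omega
      have hsplit := split hconn hac hadj
        (u := (Fin.cons a (WW a b s true) : Fin (s+1) → V))
        (v := (fun _ => pth T a b (dd+1) : Fin (s+1) → V)) (by simp) hv
      rw [show WW a b (s+1) false = Fin.cons a (WW a b s true) from by simp [WW], hsplit]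
      have ht : Fin.tail (Fin.cons a (WW a b s true) : Fin (s+1) → V) = WW a b s true := by
        funext i; simp [Fin.tail]
      rw [ht, ih.1]
      have hent := ent_corner hconn hac (corner hconn hac s) dd
        (pth T a b 1) a (pth T a b (dd+1)) hadj
        (by
          have h1 := pth_dist hconn a b (i := 1) (j := dd+1) (by omega) (by omega)
          omega)
        (by
          have h2 := pth_dist hconn a b (i := 0) (j := dd+1) (by omega) (by omega)
          have hp0 : pth T a b 0 = a := rfl
          rw [hp0] at h2
          omega)
      rw [hent]
      simp only [phiF, bb_succ, ccc_succ]
      ring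

lemma chainR (hconn : T.Connected) (hac : T.IsAcyclic) {a b : V} {dd : ℕ}
    (hd : T.dist a b = dd + 2) (t : ℕ) :
    ∀ j i, i + j = dd + 2 → 1 ≤ i →
      (SG (t+1)).dist (Fin.cons (pth T a b i) (fun _ => pth T a b (i-1)))
        (Fin.cons b (WW a b t false)) = j * bb (t+1) + phiF dd t := by
  have hlast : pth T a b (dd+2) = b := by rw [← hd]; exact pth_last hconn a b
  intro j
  induction j with
  | zero =>
    intro i hij hi
    have hieq : i = dd + 2 := by omega
    subst hieq
    have h0 : (Fin.cons (pth T a b (dd+2)) (fun _ => pth T a b (dd+2-1)) : Fin (t+1) → V) 0 =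
        (Fin.cons b (WW a b t false) : Fin (t+1) → V) 0 := by
      simp [hlast]
    rw [dist_copy' hconn hac h0]
    have ht1 : Fin.tail (Fin.cons (pth T a b (dd+2)) (fun _ => pth T a b (dd+2-1)) :
        Fin (t+1) → V) = (fun _ => pth T a b (dd+1)) := by
      funext i; simp [Fin.tail]
    have ht2 : Fin.tail (Fin.cons b (WW a b t false) : Fin (t+1) → V) = WW a b t false := by
      funext i; simp [Fin.tail]
    rw [ht1, ht2, SimpleGraph.dist_comm, (PHI hconn hac hd t).2]
    omega
  | succ j ih =>
    intro i hij hi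
    have hadj : T.Adj (pth T a b i) (pth T a b (i+1)) := pth_adj hconn (by omega)
    have hv : T.dist b (pth T a b (i+1)) + 1 = T.dist b (pth T a b i) := by
      have h1 := pth_dist hconn a b (i := i) (j := dd+2) (by omega) (by omega)
      have h2 := pth_dist hconn a b (i := i+1) (j := dd+2) (by omega) (by omega)
      rw [hlast] at h1 h2
      have hc1 : T.dist b (pth T a b (i+1)) = T.dist (pth T a b (i+1)) b := SimpleGraph.dist_comm
      have hc2 : T.dist b (pth T a b i) = T.dist (pth T a b i) b := SimpleGraph.dist_comm
      omega
    have hsplit := split hconn hac hadj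
      (u := (Fin.cons (pth T a b i) (fun _ => pth T a b (i-1)) : Fin (t+1) → V))
      (v := (Fin.cons b (WW a b t false) : Fin (t+1) → V)) (by simp) (by simpa using hv)
    rw [hsplit]
    have ht1 : Fin.tail (Fin.cons (pth T a b i) (fun _ => pth T a b (i-1)) : Fin (t+1) → V) =
        (fun _ => pth T a b (i-1)) := by
      funext i'; simp [Fin.tail]
    rw [ht1, corner hconn hac t]
    have hd2 : T.dist (pth T a b (i-1)) (pth T a b (i+1)) = 2 := by
      have := pth_dist hconn a b (i := i-1) (j := i+1) (by omega) (by omega)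
      omega
    rw [hd2]
    have hrec := ih (i+1) (by omega) (by omega)
    rw [show i + 1 - 1 = i from by omega] at hrec
    rw [hrec, bb_succ]
    ring

lemma pair_dist (hconn : T.Connected) (hac : T.IsAcyclic) {a b : V} {dd : ℕ}
    (hd : T.dist a b = dd + 2) (t : ℕ) :
    (SG (t+1)).dist (Fin.cons a (WW a b t true)) (Fin.cons b (WW a b t false)) = NNf dd t := by
  have hlast : pth T a b (dd+2) = b := by rw [← hd]; exact pth_last hconn a b
  have hadj : T.Adj a (pth T a b 1) := pth_adj hconn (a := a) (b := b) (i := 0) (by omega)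
  have hv : T.dist b (pth T a b 1) + 1 = T.dist b a := by
    have h1 := pth_dist hconn a b (i := 1) (j := dd+2) (by omega) (by omega)
    have h2 := pth_dist hconn a b (i := 0) (j := dd+2) (by omega) (by omega)
    rw [hlast] at h1 h2
    have hc1 : T.dist b (pth T a b 1) = T.dist (pth T a b 1) b := SimpleGraph.dist_comm
    have hc2 : T.dist b a = T.dist (pth T a b 0) b := SimpleGraph.dist_comm
    omega
  have hsplit := split hconn hac hadj
    (u := (Fin.cons a (WW a b t true) : Fin (t+1) → V))
    (v := (Fin.cons b (WW a b t false) : Fin (t+1) → V)) (by simp) (by simpa using hv)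
  rw [hsplit]
  have ht1 : Fin.tail (Fin.cons a (WW a b t true) : Fin (t+1) → V) = WW a b t true := by
    funext i; simp [Fin.tail]
  rw [ht1, (PHI hconn hac hd t).1]
  have hch := chainR hconn hac hd t (dd+1) 1 (by omega) (by omega)
  rw [show (1:ℕ) - 1 = 0 from rfl, show pth T a b 0 = a from rfl] at hch
  rw [hch]
  simp only [NNf, phiF]
  ring

end Pair


section Mid

variable {V : Type*} {G : SimpleGraph V}

lemma getVert_dists (hconn : G.Connected) {u v : V} (p : G.Walk u v) :
    ∀ n : ℕ, G.dist u (p.getVert n) ≤ n ∧ G.dist (p.getVert n) v ≤ p.length - n := by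
  induction p with
  | nil =>
    intro n
    refine ⟨?_, ?_⟩ <;> simp [SimpleGraph.Walk.getVert, SimpleGraph.dist_self]
  | @cons a x v' h q ih =>
    intro n
    cases n with
    | zero =>
      refine ⟨by simp [SimpleGraph.dist_self], ?_⟩
      simpa using SimpleGraph.dist_le (SimpleGraph.Walk.cons h q)
    | succ n =>
      have hg : (SimpleGraph.Walk.cons h q).getVert (n+1) = q.getVert n := rfl
      rw [hg]
      refine ⟨?_, ?_⟩
      · have h1 := (ih n).1
        have h2 := hconn.dist_triangle (u := a) (v := x) (w := q.getVert n)
        have h3 : G.dist a x ≤ 1 := by simpa using SimpleGraph.dist_le h.toWalk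
        omega
      · have h1 := (ih n).2
        have h2 : (SimpleGraph.Walk.cons h q).length = q.length + 1 := rfl
        omega

lemma tree_midpoint (hconn : G.Connected) (hac : G.IsAcyclic) :
    ∀ (m : ℕ) (a c b' w : V), G.dist a c = m → G.dist a b' = m + G.dist c b' →
      G.dist w c + m + G.dist c b' ≤ max (G.dist w a + G.dist c b') (G.dist w b' + m) := by
  intro m
  induction m with
  | zero =>
    intro a c b' w h0 hb
    have hca : a = c := (hconn.preconnected a c).dist_eq_zero_iff.mp h0
    subst hca
    omega
  | succ m ih =>
    intro a c b' w h0 hb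
    have hne : a ≠ c := by
      intro h; subst h; rw [SimpleGraph.dist_self] at h0; omega
    obtain ⟨hadj, hspec⟩ := stp_spec hconn hne
    set a1 := stp G a c with ha1
    have hd1 : G.dist a1 c = m := by omega
    have hd1b : G.dist a1 b' = m + G.dist c b' := by
      have t1 := hconn.dist_triangle (u := a1) (v := c) (w := b')
      have t2 := hconn.dist_triangle (u := a) (v := a1) (w := b')
      have t3 : G.dist a a1 ≤ 1 := by simpa using SimpleGraph.dist_le hadj.toWalk
      omega
    have hcns : ¬ eside G a a1 c := by
      refine not_eside_of_dist hconn hac hadj ?_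
      have c1 : G.dist c a1 = G.dist a1 c := SimpleGraph.dist_comm
      have c2 : G.dist c a = G.dist a c := SimpleGraph.dist_comm
      omega
    have hbns : ¬ eside G a a1 b' := by
      refine not_eside_of_dist hconn hac hadj ?_
      have c1 : G.dist b' a1 = G.dist a1 b' := SimpleGraph.dist_comm
      have c2 : G.dist b' a = G.dist a b' := SimpleGraph.dist_comm
      omega
    by_cases hw : eside G a a1 w
    · have e1 := eside_dist hconn hac hadj hw hcns
      have e2 := eside_dist hconn hac hadj hw hbns
      omega
    · have e3 := dist_of_not_eside hconn hac hadj hw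
      have e4 := ih a1 c b' w hd1 hd1b
      omega

end Mid

lemma final_arith (dd t' : ℕ) :
    NNf dd t' + 4 * (2^(t'+1) - (t'+1) - 1) = (3 * 2^(t'+1) - 2*(t'+1) - 3) * (dd + 2) := by
  have hQ1 : 1 ≤ 2^t' := Nat.one_le_two_pow
  have hQt : t' + 1 ≤ 2^t' := two_pow_ge t'
  have hP : 2^(t'+1) = 2 * 2^t' := by rw [pow_succ]; ring
  obtain ⟨B, hB⟩ : ∃ B, 2^(t'+1) - (t'+1) - 1 = B := ⟨_, rfl⟩
  obtain ⟨E, hE⟩ : ∃ E, 3 * 2^(t'+1) - 2*(t'+1) - 3 = E := ⟨_, rfl⟩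
  have hBdef : B + t' + 2 = 2 * 2^t' := by omega
  have hEdef : E + 2*t' + 5 = 6 * 2^t' := by omega
  rw [hB, hE]
  have hb1 : bb t' + 1 = 2^t' := by unfold bb; omega
  have hg1 : ccc t' + t' + 1 = 2^t' := by unfold ccc; omega
  have hbb1 : bb (t'+1) = 2 * bb t' + 1 := bb_succ t'
  simp only [NNf]
  rw [hbb1]
  have c1 : (bb t' : ℤ) + 1 = 2^t' := by exact_mod_cast hb1
  have c2 : (ccc t' : ℤ) + t' + 1 = 2^t' := by exact_mod_cast hg1
  have c3 : (B : ℤ) + t' + 2 = 2 * 2^t' := by exact_mod_cast hBdef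
  have c4 : (E : ℤ) + 2*t' + 5 = 6 * 2^t' := by exact_mod_cast hEdef
  have hgoal : (2 * (bb t' * (dd+1) + dd * ccc t') + (dd+1) * (2 * bb t' + 1) + 1
      + 4 * B : ℤ) = (E : ℤ) * (dd + 2) := by
    linear_combination (4*(dd:ℤ)+4) * c1 + (2*(dd:ℤ)) * c2 + 4 * c3 + (-(dd:ℤ)-2) * c4
  exact_mod_cast hgoal

theorem main_thm {V : Type*} [Fintype V] (T : SimpleGraph V) (hT : T.IsTree)
    (hcard : 3 ≤ Fintype.card V) (t : ℕ) (ht : 1 ≤ t) :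
    (Even (graphDiam T) →
      2 * graphRadius (SierpinskiGraph T t) =
        (3 * 2 ^ t - 2 * t - 3) * graphDiam T - 4 * (2 ^ t - t - 1)) ∧
    (Odd (graphDiam T) →
      2 * graphRadius (SierpinskiGraph T t) =
        (3 * 2 ^ t - 2 * t - 3) * graphDiam T + 4 * t + 5 - 2 ^ (t + 2)) := by
  obtain ⟨t', rfl⟩ : ∃ t', t = t' + 1 := ⟨t - 1, by omega⟩
  have hconn : T.Connected := hT.isConnected
  have hac : T.IsAcyclic := hT.IsAcyclic
  haveI : Nonempty V := hconn.nonempty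
  have hD2 : 2 ≤ graphDiam T := diam_ge_two hconn hac hcard
  obtain ⟨dd, hDD⟩ : ∃ dd, graphDiam T = dd + 2 := ⟨graphDiam T - 2, by omega⟩
  obtain ⟨a, b, hab⟩ := diam_attain (T := T)
  have hd : T.dist a b = dd + 2 := by rw [hab, hDD]
  have hpair := pair_dist hconn hac hd t'
  have hdiam := diamS hconn hac dd hDD t'
  set L := NNf dd t' with hLdef
  set u1 := (Fin.cons a (WW a b t' true) : Fin (t'+1) → V) with hu1
  set v1 := (Fin.cons b (WW a b t' false) : Fin (t'+1) → V) with hv1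
  have hSconn := sg_connected hconn (t'+1)
  have hSac := sg_acyclic hconn hac (t'+1)
  have hL2' : L = 2 * (bb t' * (dd+1) + dd * ccc t' + (dd+1) * bb t') + dd + 2 := by
    rw [hLdef]
    simp only [NNf]
    rw [bb_succ]
    ring
  have hL2 : 2 ≤ L := by omega
  set m0 := (L+1)/2 with hm0
  obtain ⟨Wgeo, hW⟩ := hSconn.exists_walk_length_eq_dist u1 v1
  obtain ⟨hga, hgb⟩ := getVert_dists hSconn Wgeo m0
  set c := Wgeo.getVert m0 with hcdef
  have hWlen : Wgeo.length = L := by rw [hW, hpair]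
  have htr : L ≤ (SierpinskiGraph T (t'+1)).dist u1 c + (SierpinskiGraph T (t'+1)).dist c v1 := by
    rw [← hpair]
    exact hSconn.dist_triangle
  have hd1 : (SierpinskiGraph T (t'+1)).dist u1 c = m0 := by omega
  have hd2 : (SierpinskiGraph T (t'+1)).dist c v1 = L - m0 := by omega
  have hecc : ∀ w, (SierpinskiGraph T (t'+1)).dist c w ≤ m0 := by
    intro w
    have hmid := tree_midpoint hSconn hSac m0 u1 c v1 w hd1 (by rw [hpair]; omega)
    have hw1 := hdiam w u1
    have hw2 := hdiam w v1
    have hcm : (SierpinskiGraph T (t'+1)).dist c w =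
      (SierpinskiGraph T (t'+1)).dist w c := SimpleGraph.dist_comm
    omega
  have hrad : graphRadius (SierpinskiGraph T (t'+1)) = m0 := by
    refine le_antisymm ?_ ?_
    · refine le_trans (ciInf_le (OrderBot.bddBelow _) c) ?_
      exact ciSup_le fun w => hecc w
    · refine le_ciInf fun x => ?_
      have e1 : (SierpinskiGraph T (t'+1)).dist x u1 ≤ _root_.eccent _ x := dist_le_ecc _ _
      have e2 : (SierpinskiGraph T (t'+1)).dist x v1 ≤ _root_.eccent _ x := dist_le_ecc _ _
      have e3 : L ≤ (SierpinskiGraph T (t'+1)).dist x u1 +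
          (SierpinskiGraph T (t'+1)).dist x v1 := by
        rw [← hpair]
        have c1 : (SierpinskiGraph T (t'+1)).dist x u1 =
          (SierpinskiGraph T (t'+1)).dist u1 x := SimpleGraph.dist_comm
        rw [c1]
        exact hSconn.dist_triangle
      omega
  have hNat : L + 4 * (2^(t'+1) - (t'+1) - 1) =
      (3 * 2^(t'+1) - 2*(t'+1) - 3) * graphDiam T := by
    rw [hDD, hLdef]
    exact final_arith dd t'
  have hQt : t' + 1 + 1 ≤ 2^(t'+1) := two_pow_ge (t'+1)
  constructor
  · intro hEven
    obtain ⟨r, hr⟩ := hEven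
    rw [hDD] at hr
    rw [hrad]
    omega
  · intro hOdd
    obtain ⟨r, hr⟩ := hOdd
    rw [hDD] at hr
    rw [hrad]
    have hpow : 2^(t'+1+2) = 4 * 2^(t'+1) := by
      rw [pow_succ, pow_succ]; ring
    omega

end Development

/-- for a finite tree `T` with at least three vertices and any `t ≥ 1`, the
radius of `S(T,t)` satisfies (stated with both sides doubled to stay in `ℕ`):
if `D(T)` is even, `r(S(T,t)) = ½(3·2^t − 2t − 3)·D(T) − 2(2^t − t − 1)`, and
if `D(T)` is odd, `r(S(T,t)) = ½((3·2^t − 2t − 3)·D(T) − 2^{t+2} + 4t + 5)`. -/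
theorem stmt_17 {V : Type*} [Fintype V] (T : SimpleGraph V) (hT : T.IsTree)
    (hcard : 3 ≤ Fintype.card V) (t : ℕ) (ht : 1 ≤ t) :
    (Even (graphDiam T) →
      2 * graphRadius (SierpinskiGraph T t) =
        (3 * 2 ^ t - 2 * t - 3) * graphDiam T - 4 * (2 ^ t - t - 1)) ∧
    (Odd (graphDiam T) →
      2 * graphRadius (SierpinskiGraph T t) =
        (3 * 2 ^ t - 2 * t - 3) * graphDiam T + 4 * t + 5 - 2 ^ (t + 2)) :=
  main_thm T hT hcard t ht
end
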